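/- arXiv:1911.12803 — 4 statements merged into one kernel-verified Lean document; each statement's English description precedes it below -/
import Mathlib

section
/- Let γ = (x(t), y(t)), with x(t), y(t) ∈ ℂ[[t]] of positive order and not both zero, be a primitive formal parametrization, and suppose there exists φ ∈ ℂ[[t]] with φ(0) = 0 and φ'(0) ≠ 0 such that x(t)^∨ = x(φ(t)) and y(t)^∨ = y(φ(t)) (the branch parametrized by γ is fixed by the anti-holomorphic involution J). Then there exists ψ ∈ ℂ[[t]] with ψ(0) = 0 and ψ'(0) ≠ 0 such that all coefficients of x(ψ(t)) and of y(ψ(t)) are real; that is, a J-fixed formal branch admits a parametrization with real coefficients. -/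
open PowerSeries

/-- Coefficientwise complex conjugation on one-variable formal power series, `g ↦ g^∨`. -/
noncomputable def psConj : PowerSeries ℂ → PowerSeries ℂ :=
  PowerSeries.map (starRingEnd ℂ)

/-- Substitution `g(h(t))` of a one-variable formal power series `h` with zero constant
term into a one-variable formal power series `g`.  (For `h` of positive order, the
coefficient of `t^n` only involves coefficients of `g` of index `≤ n`, so the finite sum
below computes the substitution.) -/
noncomputable def substOne (g h : PowerSeries ℂ) : PowerSeries ℂ :=
  PowerSeries.mk fun n =>
    ∑ i ∈ Finset.range (n + 1),
      PowerSeries.coeff i g * PowerSeries.coeff n (h ^ i)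

/-- A pair `(x(t), y(t))` is a primitive parametrization if it cannot be written as
`(x̃(h(t)), ỹ(h(t)))` for some pair `(x̃, ỹ)` and some `h` of order at least `2`. -/
def Primitive (x y : PowerSeries ℂ) : Prop :=
  ¬ ∃ (x' y' h : PowerSeries ℂ), 2 ≤ h.order ∧ x = substOne x' h ∧ y = substOne y' h

namespace JFix

local notation "cf" => PowerSeries.coeff (R := ℂ)

/-! ### basic coefficient lemmas -/

lemma coeff_substOne (g h : PowerSeries ℂ) (n : ℕ) :
    cf n (substOne g h) = ∑ i ∈ Finset.range (n + 1), cf i g * cf n (h ^ i) := by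
  simp [substOne]

lemma coeffMul0 {a b : PowerSeries ℂ} {p q : ℕ}
    (ha : ∀ k < p, cf k a = 0) (hb : ∀ k < q, cf k b = 0) :
    ∀ k < p + q, cf k (a * b) = 0 := by
  intro k hk
  rw [PowerSeries.coeff_mul]
  apply Finset.sum_eq_zero
  rintro ⟨i, j⟩ hij
  rw [Finset.HasAntidiagonal.mem_antidiagonal] at hij
  by_cases hip : i < p
  · simp [ha i hip]
  · have : j < q := by omega
    simp [hb j this]

lemma powLow2 {a : PowerSeries ℂ} {p : ℕ} (ha : ∀ k < p, cf k a = 0) (i : ℕ) :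
    ∀ k < i * p, cf k (a ^ i) = 0 := by
  induction i with
  | zero => intro k hk; omega
  | succ i ih =>
      intro k hk
      have : a ^ (i+1) = a ^ i * a := by ring
      rw [this]
      exact coeffMul0 ih ha k (by rw [Nat.succ_mul] at hk; exact hk)

lemma powLow {h : PowerSeries ℂ} (h0 : cf 0 h = 0) {i k : ℕ} (hk : k < i) :
    cf k (h ^ i) = 0 := by
  have : ∀ k < 1, cf k h = 0 := by
    intro k hk
    interval_cases k
    exact h0
  have := powLow2 this i k (by omega)
  exact this

lemma powLead {v : PowerSeries ℂ} (h0 : cf 0 v = 0) (j : ℕ) :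
    cf j (v ^ j) = (cf 1 v) ^ j := by
  induction j with
  | zero => simp
  | succ j ih =>
      have h1 : v ^ (j+1) = v * v ^ j := by ring
      rw [h1, PowerSeries.coeff_mul]
      have hlow : ∀ k < 1, cf k v = 0 := by
        intro k hk; interval_cases k; exact h0
      rw [Finset.sum_eq_single (1, j)]
      · rw [ih]; ring
      · rintro ⟨i, l⟩ hil hne
        rw [Finset.HasAntidiagonal.mem_antidiagonal] at hil
        by_cases hi : i = 0
        · subst hi; simp [h0]
        · have hl : l < j := by
            rcases Nat.lt_or_ge l j with h|h
            · exact h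
            · exfalso; apply hne
              have : i = 1 ∧ l = j := by omega
              simp [this.1, this.2]
          rw [powLow h0 hl]; ring
      · intro hmem
        exfalso; apply hmem
        simp [Finset.HasAntidiagonal.mem_antidiagonal]; omega

/-! ### substOne algebra -/

lemma coeff_zero_substOne (g h : PowerSeries ℂ) : cf 0 (substOne g h) = cf 0 g := by
  rw [coeff_substOne]
  simp

lemma coeff_one_substOne (g h : PowerSeries ℂ) : cf 1 (substOne g h) = cf 1 g * cf 1 h := by
  rw [coeff_substOne]
  rw [Finset.sum_range_succ, Finset.sum_range_one]
  simp

lemma master {h : PowerSeries ℂ} (h0 : cf 0 h = 0) (p : Polynomial ℂ) (n : ℕ) :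
    cf n (Polynomial.aeval h p) = ∑ i ∈ Finset.range (n + 1), p.coeff i * cf n (h ^ i) := by
  rcases le_or_gt (p.natDegree + 1) (n + 1) with hle | hlt
  · rw [Polynomial.aeval_eq_sum_range (p := p) h, map_sum]
    rw [Finset.sum_subset (Finset.range_subset_range.mpr hle)]
    · apply Finset.sum_congr rfl
      intro i _
      rw [PowerSeries.coeff_smul, smul_eq_mul]
    · intro i hi hni
      simp only [Finset.mem_range] at hi hni
      have : p.coeff i = 0 := Polynomial.coeff_eq_zero_of_natDegree_lt (by omega)
      rw [this, zero_smul, map_zero]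
  · rw [Polynomial.aeval_eq_sum_range (p := p) h, map_sum]
    rw [← Finset.sum_subset (Finset.range_subset_range.mpr (by omega : n + 1 ≤ p.natDegree + 1))]
    · apply Finset.sum_congr rfl
      intro i _
      rw [PowerSeries.coeff_smul, smul_eq_mul]
    · intro i hi hni
      simp only [Finset.mem_range] at hi hni
      rw [PowerSeries.coeff_smul, powLow h0 (by omega), smul_zero]

lemma substOne_eq_aeval {h : PowerSeries ℂ} (h0 : cf 0 h = 0) (g : PowerSeries ℂ)
    {n m : ℕ} (hnm : n < m) :
    cf n (substOne g h) = cf n (Polynomial.aeval h (trunc m g)) := by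
  rw [master h0, coeff_substOne]
  apply Finset.sum_congr rfl
  intro i hi
  simp only [Finset.mem_range] at hi
  rw [PowerSeries.coeff_trunc]
  rw [if_pos (by omega)]

lemma mulAgree {a a' b b' : PowerSeries ℂ} {n : ℕ}
    (ha : ∀ k ≤ n, cf k a = cf k a') (hb : ∀ k ≤ n, cf k b = cf k b') :
    cf n (a * b) = cf n (a' * b') := by
  rw [PowerSeries.coeff_mul, PowerSeries.coeff_mul]
  apply Finset.sum_congr rfl
  rintro ⟨i, j⟩ hij
  rw [Finset.HasAntidiagonal.mem_antidiagonal] at hij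
  rw [ha i (by omega), hb j (by omega)]

lemma substOne_mul {h : PowerSeries ℂ} (h0 : cf 0 h = 0) (g₁ g₂ : PowerSeries ℂ) :
    substOne (g₁ * g₂) h = substOne g₁ h * substOne g₂ h := by
  ext n
  have e1 : cf n (substOne (g₁ * g₂) h) = cf n (Polynomial.aeval h (trunc (n+1) (g₁ * g₂))) :=
    substOne_eq_aeval h0 _ (Nat.lt_succ_self n)
  have e2 : cf n (substOne g₁ h * substOne g₂ h)
      = cf n (Polynomial.aeval h (trunc (n+1) g₁) * Polynomial.aeval h (trunc (n+1) g₂)) := by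
    apply mulAgree
    · intro k hk; exact substOne_eq_aeval h0 _ (by omega)
    · intro k hk; exact substOne_eq_aeval h0 _ (by omega)
  rw [e1, e2, ← map_mul]
  rw [master h0, master h0]
  apply Finset.sum_congr rfl
  intro i hi
  simp only [Finset.mem_range] at hi
  congr 1
  rw [PowerSeries.coeff_trunc, if_pos (by omega), Polynomial.coeff_mul, PowerSeries.coeff_mul]
  apply Finset.sum_congr rfl
  rintro ⟨p, q⟩ hpq
  rw [Finset.HasAntidiagonal.mem_antidiagonal] at hpq
  rw [PowerSeries.coeff_trunc, PowerSeries.coeff_trunc, if_pos (by omega), if_pos (by omega)]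

lemma substOne_one (h : PowerSeries ℂ) : substOne 1 h = 1 := by
  ext n
  rw [coeff_substOne]
  rw [Finset.sum_eq_single 0]
  · simp
  · intro i hi hne
    rw [PowerSeries.coeff_one, if_neg hne]
    ring
  · intro hmem
    simp at hmem

lemma substOne_C (c : ℂ) (h : PowerSeries ℂ) : substOne (PowerSeries.C c) h = PowerSeries.C c := by
  ext n
  rw [coeff_substOne]
  rw [Finset.sum_eq_single 0]
  · simp [PowerSeries.coeff_C]
  · intro i hi hne
    rw [PowerSeries.coeff_C, if_neg hne]
    ring
  · intro hmem
    simp at hmem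

lemma substOne_pow {h : PowerSeries ℂ} (h0 : cf 0 h = 0) (g : PowerSeries ℂ) (n : ℕ) :
    substOne (g ^ n) h = (substOne g h) ^ n := by
  induction n with
  | zero => simpa using substOne_one h
  | succ n ih =>
      rw [pow_succ, pow_succ, substOne_mul h0, ih]

lemma substOne_X {h : PowerSeries ℂ} (h0 : cf 0 h = 0) : substOne X h = h := by
  ext n
  rw [coeff_substOne]
  rcases Nat.eq_zero_or_pos n with rfl | hn
  · simpa using h0.symm
  · rw [Finset.sum_eq_single 1]
    · simp
    · intro i hi hne
      rw [PowerSeries.coeff_X, if_neg hne]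
      ring
    · intro hmem
      simp only [Finset.mem_range] at hmem
      omega

lemma substOne_X_right (g : PowerSeries ℂ) : substOne g X = g := by
  ext n
  rw [coeff_substOne]
  rw [Finset.sum_eq_single n]
  · simp [PowerSeries.coeff_X_pow]
  · intro i hi hne
    rw [← pow_one X, ← pow_mul, one_mul, PowerSeries.coeff_X_pow, if_neg (by omega)]
    ring
  · intro hmem
    simp at hmem

lemma substOne_assoc {h k : PowerSeries ℂ} (h0 : cf 0 h = 0) (k0 : cf 0 k = 0)
    (g : PowerSeries ℂ) :
    substOne (substOne g h) k = substOne g (substOne h k) := by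
  ext n
  rw [coeff_substOne, coeff_substOne]
  have e1 : ∀ i ∈ Finset.range (n+1), cf i (substOne g h) * cf n (k ^ i)
      = ∑ j ∈ Finset.range (n+1), cf j g * cf i (h ^ j) * cf n (k ^ i) := by
    intro i hi
    simp only [Finset.mem_range] at hi
    rw [coeff_substOne, Finset.sum_mul]
    rcases le_or_gt (n+1) (i+1) with hle | hlt
    · rw [Finset.sum_subset (Finset.range_subset_range.mpr hle)]
      intro j hj hnj
      simp only [Finset.mem_range] at hj hnj
      rw [powLow h0 (by omega)]
      ring
    · rw [← Finset.sum_subset (Finset.range_subset_range.mpr hlt.le)]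
      intro j hj hnj
      simp only [Finset.mem_range] at hj hnj
      rw [powLow h0 (by omega)]
      ring
  rw [Finset.sum_congr rfl e1, Finset.sum_comm]
  apply Finset.sum_congr rfl
  intro j hj
  rw [← substOne_pow k0 h j, coeff_substOne, Finset.mul_sum]
  apply Finset.sum_congr rfl
  intro i hi
  ring

/-! ### conjugation -/

lemma coeff_psConj (g : PowerSeries ℂ) (n : ℕ) :
    cf n (psConj g) = (starRingEnd ℂ) (cf n g) := by
  simp [psConj]

lemma psConj_psConj (g : PowerSeries ℂ) : psConj (psConj g) = g := by
  ext n
  simp [psConj]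

lemma psConj_substOne (g h : PowerSeries ℂ) :
    psConj (substOne g h) = substOne (psConj g) (psConj h) := by
  ext n
  rw [coeff_psConj, coeff_substOne, coeff_substOne, map_sum]
  apply Finset.sum_congr rfl
  intro i hi
  rw [map_mul, coeff_psConj]
  congr 1
  have : (psConj h) ^ i = psConj (h ^ i) := by
    simp [psConj, ← map_pow]
  rw [this, coeff_psConj]

/-! ### perturbation lemmas -/

lemma binomTail (u v : PowerSeries ℂ) (i : ℕ) :
    u ^ i - v ^ i
      = ∑ j ∈ Finset.range i, v ^ j * (u - v) ^ (i - j) * (i.choose j : PowerSeries ℂ) := by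
  have h : u = v + (u - v) := by ring
  calc u ^ i - v ^ i = (v + (u - v)) ^ i - v ^ i := by rw [← h]
    _ = _ := by
        rw [add_pow, Finset.sum_range_succ]
        simp [Nat.choose_self]

lemma powAgree {u v : PowerSeries ℂ} (hu : cf 0 u = 0) (hv : cf 0 v = 0) {n : ℕ}
    (hag : ∀ j < n, cf j u = cf j v) {i : ℕ} (hi : 2 ≤ i) :
    ∀ k ≤ n, cf k (u ^ i) = cf k (v ^ i) := by
  intro k hk
  rcases Nat.eq_zero_or_pos n with rfl | hn
  · interval_cases k
    rw [powLow hu (by omega), powLow hv (by omega)]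
  have hw : ∀ j < n, cf j (u - v) = 0 := by
    intro j hj; rw [map_sub, hag j hj, sub_self]
  have key : cf k (u ^ i - v ^ i) = 0 := by
    rw [binomTail, map_sum]
    apply Finset.sum_eq_zero
    intro j hj
    simp only [Finset.mem_range] at hj
    have hcast : (↑(i.choose j) : PowerSeries ℂ) = PowerSeries.C (↑(i.choose j) : ℂ) := by
      simp
    rw [hcast, PowerSeries.coeff_mul_C]
    have hbound : k < j + (i - j) * n := by
      rcases Nat.eq_zero_or_pos j with rfl | hjpos
      · simp only [Nat.sub_zero, Nat.zero_add]
        calc k < n + 1 := by omega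
          _ ≤ 2 * n := by omega
          _ ≤ i * n := Nat.mul_le_mul_right n hi
      · have : n ≤ (i - j) * n := Nat.le_mul_of_pos_left n (by omega)
        omega
    rw [coeffMul0 (fun k' hk' => powLow hv hk') (powLow2 hw (i - j)) k hbound]
    ring
  rw [map_sub] at key
  exact sub_eq_zero.mp key

lemma diff (f : PowerSeries ℂ) {u v : PowerSeries ℂ} (hu : cf 0 u = 0) (hv : cf 0 v = 0)
    {n : ℕ} (hag : ∀ j < n, cf j u = cf j v) :
    (∀ k < n, cf k (substOne f u) = cf k (substOne f v)) ∧
      cf n (substOne f u) - cf n (substOne f v) = cf 1 f * (cf n u - cf n v) := by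
  constructor
  · intro k hk
    rw [coeff_substOne, coeff_substOne]
    apply Finset.sum_congr rfl
    intro i _
    congr 1
    match i with
    | 0 => rfl
    | 1 => rw [pow_one, pow_one]; exact hag k hk
    | (i+2) => exact powAgree hu hv hag (by omega) k hk.le
  · rw [coeff_substOne, coeff_substOne, ← Finset.sum_sub_distrib]
    rw [Finset.sum_eq_single 1]
    · rw [pow_one, pow_one]; ring
    · intro b _ hbne
      match b with
      | 0 => simp
      | 1 => exact absurd rfl hbne
      | (b+2) => rw [powAgree hu hv hag (by omega) n le_rfl]; ring
    · intro h1
      simp only [Finset.mem_range] at h1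
      have hn0 : n = 0 := by omega
      subst hn0
      rw [pow_one, pow_one, hu, hv]; ring

lemma pertPow {u v : PowerSeries ℂ} (hu : cf 0 u = 0) (hv : cf 0 v = 0)
    {n m : ℕ} (hn : 1 ≤ n) (hm : 2 ≤ m) (hag : ∀ j < m, cf j u = cf j v) :
    cf (n - 1 + m) (u ^ n) - cf (n - 1 + m) (v ^ n)
      = n * (cf 1 v) ^ (n - 1) * (cf m u - cf m v) := by
  have hw : ∀ j < m, cf j (u - v) = 0 := by
    intro j hj; rw [map_sub, hag j hj, sub_self]
  have step : cf (n - 1 + m) (u ^ n) - cf (n - 1 + m) (v ^ n)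
      = cf (n - 1 + m) (u ^ n - v ^ n) := by rw [map_sub]
  rw [step, binomTail, map_sum, Finset.sum_eq_single (n - 1)]
  · have hsub : n - (n - 1) = 1 := by omega
    rw [hsub, pow_one]
    have hch : (n.choose (n - 1)) = n := by
      rw [Nat.choose_symm hn, Nat.choose_one_right]
    have hcast : (↑(n.choose (n-1)) : PowerSeries ℂ) = PowerSeries.C (↑(n.choose (n-1)) : ℂ) := by
      simp
    rw [hcast, PowerSeries.coeff_mul_C, hch]
    rw [PowerSeries.coeff_mul, Finset.sum_eq_single (n - 1, m)]
    · rw [powLead hv, map_sub]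
      ring
    · rintro ⟨p, q⟩ hpq hne
      rw [Finset.HasAntidiagonal.mem_antidiagonal] at hpq
      by_cases hp : p < n - 1
      · rw [powLow hv hp]; ring
      · have hq : q < m := by
          rcases Nat.lt_or_ge q m with h' | h'
          · exact h'
          · exfalso; apply hne
            have : p = n - 1 ∧ q = m := by omega
            rw [this.1, this.2]
        rw [hw q hq]; ring
    · intro hmem
      exfalso; apply hmem
      rw [Finset.HasAntidiagonal.mem_antidiagonal]
  · intro j hj hne
    simp only [Finset.mem_range] at hj
    have hcast : (↑(n.choose j) : PowerSeries ℂ) = PowerSeries.C (↑(n.choose j) : ℂ) := by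
      simp
    rw [hcast, PowerSeries.coeff_mul_C]
    have hr : 2 ≤ n - j := by omega
    have h2 : (n - j) * m = (n - j - 1) * m + m := by
      have hrr : n - j = (n - j - 1) + 1 := by omega
      conv_lhs => rw [hrr, Nat.succ_mul]
    have h1 : (n - j - 1) * 2 ≤ (n - j - 1) * m := Nat.mul_le_mul_left _ hm
    have hbound : n - 1 + m < j + (n - j) * m := by
      rw [Nat.mul_comm (n - j - 1) 2] at h1
      omega
    rw [coeffMul0 (fun k' hk' => powLow hv hk') (powLow2 hw (n - j)) _ hbound]
    ring
  · intro hmem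
    simp only [Finset.mem_range] at hmem
    omega

/-! ### generic coefficient-by-coefficient construction -/

noncomputable def buildSeries (F : PowerSeries ℂ → ℕ → ℂ) : ℕ → PowerSeries ℂ
  | 0 => 0
  | n + 1 => buildSeries F n + PowerSeries.C (F (buildSeries F n) n) * X ^ n

noncomputable def mkSeries (F : PowerSeries ℂ → ℕ → ℂ) : PowerSeries ℂ :=
  PowerSeries.mk fun n => cf n (buildSeries F (n + 1))

lemma coeff_buildSeries_of_le (F : PowerSeries ℂ → ℕ → ℂ) {k m : ℕ} (h : m ≤ k) :
    cf k (buildSeries F m) = 0 := by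
  induction m generalizing k with
  | zero => simp [buildSeries]
  | succ m ih =>
      rw [buildSeries, map_add, ih (by omega), PowerSeries.coeff_C_mul,
        PowerSeries.coeff_X_pow, if_neg (by omega)]
      ring

lemma coeff_buildSeries (F : PowerSeries ℂ → ℕ → ℂ) {k m : ℕ} (h : k < m) :
    cf k (buildSeries F m) = cf k (mkSeries F) := by
  have key : ∀ m', k < m' → cf k (buildSeries F m') = cf k (buildSeries F (k + 1)) := by
    intro m' hm'
    induction m' with
    | zero => omega
    | succ m' ih =>
        rcases Nat.lt_or_ge k m' with h' | h'
        · rw [buildSeries, map_add, PowerSeries.coeff_C_mul, PowerSeries.coeff_X_pow,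
            if_neg (by omega), ih h']
          ring
        · have : k = m' := by omega
          subst this
          rfl
  rw [key m h, mkSeries, PowerSeries.coeff_mk]

lemma coeff_mkSeries (F : PowerSeries ℂ → ℕ → ℂ) (n : ℕ) :
    cf n (mkSeries F) = F (buildSeries F n) n := by
  rw [mkSeries, PowerSeries.coeff_mk, buildSeries, map_add,
    coeff_buildSeries_of_le F le_rfl, PowerSeries.coeff_C_mul, PowerSeries.coeff_X_pow,
    if_pos rfl]
  ring

/-! ### uniqueness of roots, right inverses, roots -/

lemma uniqRoot {u v : PowerSeries ℂ} (hu : cf 0 u = 0) (hv : cf 0 v = 0)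
    {n : ℕ} (hn : 1 ≤ n) (h1 : cf 1 u = cf 1 v) (hv1 : cf 1 v ≠ 0)
    (hpow : u ^ n = v ^ n) : u = v := by
  by_contra hne
  have hex : ∃ k, cf k (u - v) ≠ 0 := by
    by_contra hall
    push_neg at hall
    apply hne
    ext k
    have := hall k
    rw [map_sub] at this
    exact sub_eq_zero.mp this
  classical
  let m := Nat.find hex
  have hm : cf m (u - v) ≠ 0 := Nat.find_spec hex
  have hlow : ∀ k < m, cf k (u - v) = 0 := by
    intro k hk
    by_contra h'
    exact Nat.find_min hex hk h'
  have hag : ∀ k < m, cf k u = cf k v := by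
    intro k hk
    have := hlow k hk
    rw [map_sub, sub_eq_zero] at this
    exact this
  have hm2 : 2 ≤ m := by
    rcases Nat.lt_or_ge m 2 with h' | h'
    · exfalso
      interval_cases m
      · rw [map_sub, hu, hv, sub_self] at hm; exact hm rfl
      · rw [map_sub, h1, sub_self] at hm; exact hm rfl
    · exact h'
  have heq := pertPow hu hv hn hm2 hag
  rw [hpow, sub_self] at heq
  have hmm : cf m u - cf m v ≠ 0 := by
    rw [← map_sub]; exact hm
  have hne0 : (n : ℂ) * (cf 1 v) ^ (n - 1) * (cf m u - cf m v) ≠ 0 := by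
    apply mul_ne_zero
    apply mul_ne_zero
    · exact_mod_cast Nat.cast_ne_zero.mpr (by omega)
    · exact pow_ne_zero _ hv1
    · exact hmm
  exact hne0 heq.symm

lemma exists_rinv {σ : PowerSeries ℂ} (h0 : cf 0 σ = 0) (h1 : cf 1 σ ≠ 0) :
    ∃ ι : PowerSeries ℂ, cf 0 ι = 0 ∧ cf 1 ι = (cf 1 σ)⁻¹ ∧ substOne σ ι = X := by
  classical
  set F : PowerSeries ℂ → ℕ → ℂ := fun v n =>
    if n = 0 then 0 else if n = 1 then (cf 1 σ)⁻¹
    else -((cf 1 σ)⁻¹ * cf n (substOne σ v)) with hF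
  have h00 : cf 0 (mkSeries F) = 0 := by rw [coeff_mkSeries]; simp [hF]
  refine ⟨mkSeries F, h00, ?_, ?_⟩
  · rw [coeff_mkSeries]; simp [hF]
  · ext n
    obtain _ | _ | n := n
    · rw [coeff_zero_substOne, h0]
      simp
    · rw [coeff_one_substOne, coeff_mkSeries]
      simp [hF, mul_inv_cancel₀ h1]
    · have hv0 : cf 0 (buildSeries F (n + 2)) = 0 := by
        rw [coeff_buildSeries F (by omega)]; exact h00
      have hag : ∀ j < n + 2, cf j (mkSeries F) = cf j (buildSeries F (n + 2)) :=
        fun j hj => (coeff_buildSeries F hj).symm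
      have hd := (diff σ h00 hv0 hag).2
      have hvn : cf (n + 2) (buildSeries F (n + 2)) = 0 := coeff_buildSeries_of_le F le_rfl
      have hιn : cf (n + 2) (mkSeries F)
          = -((cf 1 σ)⁻¹ * cf (n + 2) (substOne σ (buildSeries F (n + 2)))) := by
        rw [coeff_mkSeries]; simp [hF]
      rw [hvn, hιn] at hd
      have hinv : cf 1 σ * (cf 1 σ)⁻¹ = 1 := mul_inv_cancel₀ h1
      rw [PowerSeries.coeff_X, if_neg (by omega)]
      linear_combination hd - cf (n + 2) (substOne σ (buildSeries F (n + 2))) * hinv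

lemma exists_inv {σ : PowerSeries ℂ} (h0 : cf 0 σ = 0) (h1 : cf 1 σ ≠ 0) :
    ∃ ι : PowerSeries ℂ, cf 0 ι = 0 ∧ cf 1 ι ≠ 0 ∧ substOne σ ι = X ∧ substOne ι σ = X := by
  obtain ⟨ι, hι0, hι1, hσι⟩ := exists_rinv h0 h1
  have hι1' : cf 1 ι ≠ 0 := by rw [hι1]; exact inv_ne_zero h1
  obtain ⟨ρ, hρ0, _, hιρ⟩ := exists_rinv hι0 hι1'
  have hρσ : σ = ρ := by
    have e1 : substOne (substOne σ ι) ρ = substOne σ (substOne ι ρ) := substOne_assoc hι0 hρ0 σ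
    rw [hσι, hιρ, substOne_X hρ0, substOne_X_right] at e1
    exact e1.symm
  exact ⟨ι, hι0, hι1', hσι, by rw [hρσ]; exact hιρ⟩

lemma exists_root {f : PowerSeries ℂ} {n : ℕ} (hn : 1 ≤ n) {b : ℂ} (hb : b ≠ 0)
    (hbn : b ^ n = cf n f) (hlow : ∀ k < n, cf k f = 0) :
    ∃ ξ : PowerSeries ℂ, cf 0 ξ = 0 ∧ cf 1 ξ = b ∧ ξ ^ n = f := by
  classical
  set F : PowerSeries ℂ → ℕ → ℂ := fun v m =>
    if m = 0 then 0 else if m = 1 then b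
    else (cf (n - 1 + m) f - cf (n - 1 + m) (v ^ n)) / ((n : ℂ) * b ^ (n - 1)) with hF
  have h00 : cf 0 (mkSeries F) = 0 := by rw [coeff_mkSeries]; simp [hF]
  have h11 : cf 1 (mkSeries F) = b := by rw [coeff_mkSeries]; simp [hF]
  refine ⟨mkSeries F, h00, h11, ?_⟩
  ext j
  rcases Nat.lt_or_ge j n with hj | hj
  · rw [powLow h00 hj, hlow j hj]
  rcases Nat.eq_or_lt_of_le hj with hj' | hj'
  · rw [← hj', powLead h00, h11, hbn, hj']
  · set m := j - n + 1 with hm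
    have hm2 : 2 ≤ m := by omega
    have hjm : j = n - 1 + m := by omega
    have hv0 : cf 0 (buildSeries F m) = 0 := by
      rw [coeff_buildSeries F (by omega)]; exact h00
    have hag : ∀ i < m, cf i (mkSeries F) = cf i (buildSeries F m) :=
      fun i hi => (coeff_buildSeries F hi).symm
    have hv1 : cf 1 (buildSeries F m) = b := by
      rw [coeff_buildSeries F (by omega)]; exact h11
    have hpert := pertPow h00 hv0 hn hm2 hag
    have hvm : cf m (buildSeries F m) = 0 := coeff_buildSeries_of_le F le_rfl
    have hξm : cf m (mkSeries F)
        = (cf (n - 1 + m) f - cf (n - 1 + m) ((buildSeries F m) ^ n))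
            / ((n : ℂ) * b ^ (n - 1)) := by
      rw [coeff_mkSeries]
      rw [hF]
      simp only []
      rw [if_neg (by omega), if_neg (by omega)]
    have hc : (n : ℂ) * b ^ (n - 1) ≠ 0 :=
      mul_ne_zero (Nat.cast_ne_zero.mpr (by omega)) (pow_ne_zero _ hb)
    have hinv : (n : ℂ) * b ^ (n - 1) * ((n : ℂ) * b ^ (n - 1))⁻¹ = 1 := mul_inv_cancel₀ hc
    rw [hvm, hξm, hv1] at hpert
    rw [hjm]
    rw [div_eq_mul_inv] at hpert
    linear_combination hpert
      + (cf (n - 1 + m) f - cf (n - 1 + m) ((buildSeries F m) ^ n)) * hinv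

/-! ### scaling and series in t^d -/

lemma scale (g : PowerSeries ℂ) (c : ℂ) (k : ℕ) :
    cf k (substOne g (PowerSeries.C c * X)) = cf k g * c ^ k := by
  rw [coeff_substOne]
  rw [Finset.sum_eq_single k]
  · rw [mul_pow, ← map_pow, PowerSeries.coeff_C_mul, PowerSeries.coeff_X_pow, if_pos rfl]
    ring
  · intro i _ hne
    rw [mul_pow, ← map_pow, PowerSeries.coeff_C_mul, PowerSeries.coeff_X_pow,
      if_neg (fun h' => hne h'.symm)]
    ring
  · intro hmem
    simp at hmem

lemma compXd {g : PowerSeries ℂ} {d : ℕ} (hd : 1 ≤ d) (hg : ∀ k, ¬ d ∣ k → cf k g = 0) :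
    g = substOne (PowerSeries.mk fun j => cf (d * j) g) (X ^ d) := by
  ext m
  rw [coeff_substOne]
  by_cases hdm : d ∣ m
  · obtain ⟨i0, rfl⟩ := hdm
    rw [Finset.sum_eq_single i0]
    · rw [PowerSeries.coeff_mk, ← pow_mul, PowerSeries.coeff_X_pow, if_pos rfl, mul_one]
    · intro i _ hne
      rw [← pow_mul, PowerSeries.coeff_X_pow,
        if_neg (fun h' => hne (Nat.eq_of_mul_eq_mul_left (by omega) h'.symm))]
      ring
    · intro hmem
      exfalso; apply hmem
      simp only [Finset.mem_range]
      have : i0 ≤ d * i0 := Nat.le_mul_of_pos_left i0 (by omega)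
      omega
  · rw [hg m hdm]
    symm
    apply Finset.sum_eq_zero
    intro i _
    rw [← pow_mul, PowerSeries.coeff_X_pow, if_neg (fun h' => hdm ⟨i, h'⟩)]
    ring

/-! ### the key rigidity lemma -/

lemma lemmaA {σ : PowerSeries ℂ} (hσ0 : cf 0 σ = 0) {f : PowerSeries ℂ}
    (hf : f ≠ 0) (hf0 : cf 0 f = 0) (hfσ : substOne f σ = f) :
    σ = X ∨ ∃ h : PowerSeries ℂ, 2 ≤ h.order ∧
      ∀ g : PowerSeries ℂ, substOne g σ = g → ∃ gg, g = substOne gg h := by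
  classical
  have hex : ∃ n, cf n f ≠ 0 := by
    by_contra hall
    push_neg at hall
    exact hf (PowerSeries.ext fun n => by rw [hall n, map_zero])
  set n := Nat.find hex with hn
  have hfn : cf n f ≠ 0 := Nat.find_spec hex
  have hflow : ∀ k < n, cf k f = 0 := fun k hk => not_not.mp (Nat.find_min hex hk)
  have hn1 : 1 ≤ n := by
    rcases Nat.eq_zero_or_pos n with h' | h'
    · exfalso; exact hfn (by rw [h']; exact hf0)
    · exact h'
  have hσn : (cf 1 σ) ^ n = 1 := by
    have e := congrArg (cf n) hfσ
    rw [coeff_substOne, Finset.sum_eq_single n] at e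
    · rw [powLead hσ0 n] at e
      exact mul_left_cancel₀ hfn (by rw [e, mul_one])
    · intro i hi hne
      simp only [Finset.mem_range] at hi
      rw [hflow i (by omega)]; ring
    · intro h'; simp at h'
  have hζ0 : cf 1 σ ≠ 0 := by
    intro h'
    rw [h', zero_pow (by omega)] at hσn
    exact zero_ne_one hσn
  obtain ⟨b, hbn⟩ := IsAlgClosed.exists_pow_nat_eq (cf n f) (by omega : 0 < n)
  have hb : b ≠ 0 := fun h' => hfn (by rw [← hbn, h', zero_pow (by omega)])
  obtain ⟨ξ, hξ0, hξ1, hξn⟩ := exists_root hn1 hb hbn hflow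
  have hξ1' : cf 1 ξ ≠ 0 := by rw [hξ1]; exact hb
  obtain ⟨ι, hι0, hι1, hξι, hιξ⟩ := exists_inv hξ0 hξ1'
  have hη0 : cf 0 (substOne ξ σ) = 0 := by rw [coeff_zero_substOne]; exact hξ0
  have hηn : (substOne ξ σ) ^ n = ξ ^ n := by
    calc (substOne ξ σ) ^ n = substOne (ξ ^ n) σ := (substOne_pow hσ0 ξ n).symm
      _ = f := by rw [hξn, hfσ]
      _ = ξ ^ n := hξn.symm
  have hCζξ : substOne ξ σ = PowerSeries.C (cf 1 σ) * ξ := by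
    apply uniqRoot hη0 ?_ hn1 ?_ ?_ ?_
    · rw [PowerSeries.coeff_C_mul, hξ0, mul_zero]
    · rw [coeff_one_substOne, PowerSeries.coeff_C_mul, hξ1]; ring
    · rw [PowerSeries.coeff_C_mul, hξ1]; exact mul_ne_zero hζ0 hb
    · rw [mul_pow, ← map_pow, hσn, map_one, one_mul, hηn]
  by_cases hζ1 : cf 1 σ = 1
  · left
    have hηξ : substOne ξ σ = ξ := by rw [hCζξ, hζ1, map_one, one_mul]
    have e1 : substOne (substOne ι ξ) σ = substOne ι (substOne ξ σ) := substOne_assoc hξ0 hσ0 ι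
    rw [hιξ, substOne_X hσ0, hηξ, hιξ] at e1
    exact e1
  · right
    have hdn : orderOf (cf 1 σ) ∣ n := orderOf_dvd_of_pow_eq_one hσn
    have hd0 : orderOf (cf 1 σ) ≠ 0 := by
      intro h'
      rw [h'] at hdn
      exact absurd (zero_dvd_iff.mp hdn) (by omega)
    have hd1 : orderOf (cf 1 σ) ≠ 1 := fun h' => hζ1 (orderOf_eq_one_iff.mp h')
    set d := orderOf (cf 1 σ) with hd
    have hd2 : 2 ≤ d := by omega
    refine ⟨ξ ^ d, ?_, ?_⟩
    · have hcc : ∀ i < 2, cf i (ξ ^ d) = 0 := fun i hi => powLow hξ0 (by omega)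
      exact_mod_cast PowerSeries.nat_le_order _ 2 hcc
    · intro g hgσ
      have hgξ : substOne (substOne g ι) ξ = g := by
        rw [substOne_assoc hι0 hξ0 g, hιξ, substOne_X_right]
      have hCX0 : cf 0 (PowerSeries.C (cf 1 σ) * X) = 0 := by
        rw [PowerSeries.coeff_C_mul]
        simp
      have hscale : substOne (substOne g ι) (PowerSeries.C (cf 1 σ) * X) = substOne g ι := by
        have e1 : substOne (substOne (substOne g ι) (PowerSeries.C (cf 1 σ) * X)) ξ
            = substOne (substOne g ι) (substOne (PowerSeries.C (cf 1 σ) * X) ξ) :=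
          substOne_assoc hCX0 hξ0 _
        have e2 : substOne (PowerSeries.C (cf 1 σ) * X) ξ = PowerSeries.C (cf 1 σ) * ξ := by
          rw [substOne_mul hξ0, substOne_C, substOne_X hξ0]
        rw [e2, ← hCζξ, ← substOne_assoc hξ0 hσ0 (substOne g ι), hgξ, hgσ] at e1
        have e3 := congrArg (fun w => substOne w ι) e1
        beta_reduce at e3
        rw [substOne_assoc hξ0 hι0, hξι, substOne_X_right] at e3
        exact e3
      have hcoe : ∀ k, ¬ d ∣ k → cf k (substOne g ι) = 0 := by
        intro k hk
        have hsc := congrArg (cf k) hscale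
        rw [scale] at hsc
        have hζk : (cf 1 σ) ^ k ≠ 1 := fun h' => hk (orderOf_dvd_of_pow_eq_one h')
        by_contra h'
        exact hζk (mul_left_cancel₀ h' (by rw [hsc, mul_one]))
      refine ⟨PowerSeries.mk fun j => cf (d * j) (substOne g ι), ?_⟩
      have hXd0 : cf 0 ((X : PowerSeries ℂ) ^ d) = 0 := by
        rw [PowerSeries.coeff_X_pow, if_neg (by omega)]
      calc g = substOne (substOne g ι) ξ := hgξ.symm
        _ = substOne (substOne (PowerSeries.mk fun j => cf (d * j) (substOne g ι)) (X ^ d)) ξ := by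
            rw [← compXd (by omega : 1 ≤ d) hcoe]
        _ = substOne (PowerSeries.mk fun j => cf (d * j) (substOne g ι))
              (substOne (X ^ d) ξ) := substOne_assoc hXd0 hξ0 _
        _ = _ := by rw [substOne_pow hξ0, substOne_X hξ0]

lemma primFix {x y : PowerSeries ℂ} (hx : cf 0 x = 0) (hy : cf 0 y = 0)
    (hne : ¬(x = 0 ∧ y = 0)) (hprim : Primitive x y)
    {σ : PowerSeries ℂ} (hσ0 : cf 0 σ = 0)
    (hxσ : substOne x σ = x) (hyσ : substOne y σ = y) : σ = X := by
  by_cases hx0 : x = 0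
  · have hy0 : y ≠ 0 := fun h' => hne ⟨hx0, h'⟩
    rcases lemmaA hσ0 hy0 hy hyσ with h | ⟨h, hord, hall⟩
    · exact h
    · exfalso
      apply hprim
      obtain ⟨xg, hxg⟩ := hall x hxσ
      obtain ⟨yg, hyg⟩ := hall y hyσ
      exact ⟨xg, yg, h, hord, hxg, hyg⟩
  · rcases lemmaA hσ0 hx0 hx hxσ with h | ⟨h, hord, hall⟩
    · exact h
    · exfalso
      apply hprim
      obtain ⟨xg, hxg⟩ := hall x hxσ
      obtain ⟨yg, hyg⟩ := hall y hyσ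
      exact ⟨xg, yg, h, hord, hxg, hyg⟩

end JFix

/-- a primitive formal branch fixed by the anti-holomorphic involution `J`
(i.e. `(x^∨, y^∨)` is a reparametrization of `(x, y)` by a formal diffeomorphism `φ`)
admits a parametrization with real coefficients: there is a formal diffeomorphism `ψ`
such that all coefficients of `x(ψ(t))` and `y(ψ(t))` are real. -/
theorem jFixed_branch_has_real_parametrization (x y : PowerSeries ℂ)
    (hx : PowerSeries.coeff 0 x = 0) (hy : PowerSeries.coeff 0 y = 0)
    (hne : ¬(x = 0 ∧ y = 0)) (hprim : Primitive x y)
    (φ : PowerSeries ℂ) (hφ0 : PowerSeries.coeff 0 φ = 0)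
    (hφ1 : PowerSeries.coeff 1 φ ≠ 0)
    (hfx : psConj x = substOne x φ) (hfy : psConj y = substOne y φ) :
    ∃ ψ : PowerSeries ℂ, PowerSeries.coeff 0 ψ = 0 ∧ PowerSeries.coeff 1 ψ ≠ 0 ∧
      (∀ n, (PowerSeries.coeff n (substOne x ψ)).im = 0) ∧
      (∀ n, (PowerSeries.coeff n (substOne y ψ)).im = 0) := by
  classical
  open JFix in
  have hφc0 : coeff 0 (psConj φ) = 0 := by
    rw [coeff_psConj, hφ0, map_zero]
  have hσ0 : coeff 0 (substOne φ (psConj φ)) = 0 := by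
    rw [coeff_zero_substOne]; exact hφ0
  have fixer : ∀ g : PowerSeries ℂ, psConj g = substOne g φ →
      substOne g (substOne φ (psConj φ)) = g := by
    intro g hfg
    have e := congrArg psConj hfg
    rw [psConj_psConj, psConj_substOne] at e
    rw [hfg, substOne_assoc hφ0 hφc0] at e
    exact e.symm
  have hσX : substOne φ (psConj φ) = X :=
    primFix hx hy hne hprim hσ0 (fixer x hfx) (fixer y hfy)
  have ha : coeff 1 φ * (starRingEnd ℂ) (coeff 1 φ) = 1 := by
    have e := congrArg (coeff 1) hσX
    rw [coeff_one_substOne, coeff_psConj, PowerSeries.coeff_one_X] at e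
    exact e
  obtain ⟨s, hs2⟩ := IsAlgClosed.exists_pow_nat_eq (coeff 1 φ) (by norm_num : 0 < 2)
  have hs1 : s * (starRingEnd ℂ) s = 1 := by
    have h1 : s * (starRingEnd ℂ) s = (Complex.normSq s : ℂ) := Complex.mul_conj s
    have h2 : (s * (starRingEnd ℂ) s) ^ 2 = 1 := by
      rw [mul_pow, ← map_pow, hs2]; exact ha
    rw [h1] at h2 ⊢
    have h3 : (Complex.normSq s) ^ 2 = 1 := by exact_mod_cast h2
    have h4 : Complex.normSq s = 1 := by nlinarith [Complex.normSq_nonneg s]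
    rw [h4]; norm_num
  have hsne : s ≠ 0 := by
    intro h'
    rw [h', zero_mul] at hs1
    exact zero_ne_one hs1
  have has : coeff 1 φ * (starRingEnd ℂ) s = s := by
    calc coeff 1 φ * (starRingEnd ℂ) s = s ^ 2 * (starRingEnd ℂ) s := by rw [hs2]
      _ = s * (s * (starRingEnd ℂ) s) := by ring
      _ = s := by rw [hs1, mul_one]
  set F : PowerSeries ℂ → ℕ → ℂ := fun v n =>
    if n = 0 then 0 else if n = 1 then s
    else coeff n (substOne φ (psConj v)) / 2 with hF
  have h00 : coeff 0 (mkSeries F) = 0 := by rw [coeff_mkSeries]; simp [hF]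
  have h11 : coeff 1 (mkSeries F) = s := by rw [coeff_mkSeries]; simp [hF]
  have hbuild0 : ∀ m, coeff 0 (buildSeries F m) = 0 := by
    intro m
    rcases Nat.eq_zero_or_pos m with rfl | hm
    · simp [buildSeries]
    · rw [coeff_buildSeries F hm]; exact h00
  have hcψ0 : coeff 0 (psConj (mkSeries F)) = 0 := by
    rw [coeff_psConj, h00, map_zero]
  have key : ∀ n, coeff n (substOne φ (psConj (mkSeries F)))
      = coeff n (mkSeries F) := by
    intro n
    induction n using Nat.strong_induction_on with
    | _ n ih =>
      rcases n with _ | (_ | n)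
      · rw [coeff_zero_substOne, hφ0, h00]
      · rw [coeff_one_substOne, coeff_psConj, h11]
        exact has
      · have hv0 : coeff 0 (buildSeries F (n+2)) = 0 := hbuild0 _
        have hcv0 : coeff 0 (psConj (buildSeries F (n+2))) = 0 := by
          rw [coeff_psConj, hv0, map_zero]
        have hagc : ∀ j < n + 2, coeff j (psConj (mkSeries F))
            = coeff j (psConj (buildSeries F (n+2))) := by
          intro j hj
          rw [coeff_psConj, coeff_psConj, coeff_buildSeries F hj]
        have hd1 := (diff φ hcψ0 hcv0 hagc).2
        have hu0 : coeff 0 (substOne φ (psConj (buildSeries F (n+2)))) = 0 := by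
          rw [coeff_zero_substOne]; exact hφ0
        have hagu : ∀ j < n + 2, coeff j (substOne φ (psConj (buildSeries F (n+2))))
            = coeff j (buildSeries F (n+2)) := by
          intro j hj
          calc coeff j (substOne φ (psConj (buildSeries F (n+2))))
              = coeff j (substOne φ (psConj (mkSeries F))) :=
                ((diff φ hcψ0 hcv0 hagc).1 j hj).symm
            _ = coeff j (mkSeries F) := ih j (by omega)
            _ = coeff j (buildSeries F (n+2)) := (coeff_buildSeries F hj).symm
        have hback : substOne φ (psConj (substOne φ (psConj (buildSeries F (n+2)))))
            = buildSeries F (n+2) := by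
          rw [psConj_substOne, psConj_psConj, ← substOne_assoc hφc0 hv0, hσX,
            substOne_X hv0]
        have hcu0 : coeff 0 (psConj (substOne φ (psConj (buildSeries F (n+2))))) = 0 := by
          rw [coeff_psConj, hu0, map_zero]
        have hagcu : ∀ j < n + 2,
            coeff j (psConj (substOne φ (psConj (buildSeries F (n+2)))))
            = coeff j (psConj (buildSeries F (n+2))) := by
          intro j hj
          rw [coeff_psConj, coeff_psConj, hagu j hj]
        have hd2 := (diff φ hcu0 hcv0 hagcu).2
        rw [hback] at hd2
        have hvn : coeff (n+2) (buildSeries F (n+2)) = 0 :=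
          coeff_buildSeries_of_le F le_rfl
        have hψc : coeff (n+2) (mkSeries F)
            = coeff (n+2) (substOne φ (psConj (buildSeries F (n+2)))) / 2 := by
          rw [coeff_mkSeries]; simp [hF]
        rw [coeff_psConj, coeff_psConj, hψc, hvn, map_zero] at hd1
        rw [coeff_psConj, coeff_psConj, hvn, map_zero] at hd2
        have h2c : (starRingEnd ℂ)
              (coeff (n+2) (substOne φ (psConj (buildSeries F (n+2)))) / 2)
            = (starRingEnd ℂ)
              (coeff (n+2) (substOne φ (psConj (buildSeries F (n+2))))) / 2 := by
          rw [map_div₀, map_ofNat]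
        rw [h2c] at hd1
        rw [hψc]
        linear_combination hd1 - hd2 / 2
  have hψfix : substOne φ (psConj (mkSeries F)) = mkSeries F := PowerSeries.ext key
  have hreal : ∀ g : PowerSeries ℂ, psConj g = substOne g φ →
      ∀ n, (coeff n (substOne g (mkSeries F))).im = 0 := by
    intro g hfg n
    have e : psConj (substOne g (mkSeries F)) = substOne g (mkSeries F) := by
      rw [psConj_substOne, hfg, substOne_assoc hφ0 hcψ0, hψfix]
    have e2 := congrArg (coeff n) e
    rw [coeff_psConj] at e2
    exact Complex.conj_eq_iff_im.mp e2
  exact ⟨mkSeries F, h00, by rw [h11]; exact hsne, hreal x hfx, hreal y hfy⟩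
end

section
/- Let P, Q ∈ ℝ[[x,y]] and let X = P ∂/∂x + Q ∂/∂y. Consider the set S of separatrix branches of the complexification of X: equivalence classes, modulo reparametrization by formal diffeomorphisms φ ∈ ℂ[[t]] (φ(0)=0, φ'(0) ≠ 0), of primitive parametrizations γ = (x(t),y(t)) with x(t),y(t) ∈ ℂ[[t]] of positive order, not both zero, satisfying (P∘γ)·y'(t) − (Q∘γ)·x'(t) = 0. If S is finite and has odd cardinality, then X admits a real formal separatrix: a primitive parametrization γ = (x(t),y(t)) with x(t),y(t) ∈ ℝ[[t]] of positive order, not both zero, satisfying (P∘γ)·y'(t) − (Q∘γ)·x'(t) = 0. -/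
open PowerSeries

/-- Coefficientwise complex conjugation on two-variable formal power series, `P ↦ P^∨`. -/
noncomputable def mvConj : MvPowerSeries (Fin 2) ℂ → MvPowerSeries (Fin 2) ℂ :=
  MvPowerSeries.map (starRingEnd ℂ)

/-- Substitution `P ∘ (a(t), b(t))` of a pair of one-variable formal power series with zero
constant term into a two-variable formal power series `P(x,y)`.  (For `a, b` of positive
order, the coefficient of `t^n` only involves monomials `x^i y^j` of `P` with `i + j ≤ n`,
so the finite sum below computes the substitution.) -/
noncomputable def substPair (P : MvPowerSeries (Fin 2) ℂ) (a b : PowerSeries ℂ) :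
    PowerSeries ℂ :=
  PowerSeries.mk fun n =>
    ∑ i ∈ Finset.range (n + 1), ∑ j ∈ Finset.range (n + 1),
      MvPowerSeries.coeff (Finsupp.single 0 i + Finsupp.single 1 j) P *
        PowerSeries.coeff n (a ^ i * b ^ j)

/-- The coefficientwise inclusion `ℝ[[x,y]] → ℂ[[x,y]]` (complexification). -/
noncomputable def complexify : MvPowerSeries (Fin 2) ℝ → MvPowerSeries (Fin 2) ℂ :=
  MvPowerSeries.map Complex.ofRealHom

/-- `γ = (x(t), y(t))` is a primitive formal separatrix parametrization of the vector
field `X = P ∂/∂x + Q ∂/∂y`: `x, y` have positive order, are not both zero, `γ` is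
primitive, and `(P∘γ)·y' − (Q∘γ)·x' = 0`. -/
def IsSepParam (P Q : MvPowerSeries (Fin 2) ℂ) (γ : PowerSeries ℂ × PowerSeries ℂ) :
    Prop :=
  PowerSeries.coeff 0 γ.1 = 0 ∧ PowerSeries.coeff 0 γ.2 = 0 ∧
    ¬(γ.1 = 0 ∧ γ.2 = 0) ∧ Primitive γ.1 γ.2 ∧
    substPair P γ.1 γ.2 * PowerSeries.derivativeFun γ.2
      - substPair Q γ.1 γ.2 * PowerSeries.derivativeFun γ.1 = 0

/-- Two parametrizations define the same branch when one is obtained from the other by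
substituting a formal diffeomorphism `φ` (`φ(0) = 0`, `φ'(0) ≠ 0`). -/
def Reparam (γ δ : PowerSeries ℂ × PowerSeries ℂ) : Prop :=
  ∃ φ : PowerSeries ℂ, PowerSeries.coeff 0 φ = 0 ∧ PowerSeries.coeff 1 φ ≠ 0 ∧
    δ.1 = substOne γ.1 φ ∧ δ.2 = substOne γ.2 φ

namespace SepAux


lemma coeff_pow_zero_of_lt {h : PowerSeries ℂ} (h0 : coeff 0 h = 0) :
    ∀ i d, d < i → coeff d (h ^ i) = 0 := by
  intro i
  induction i with
  | zero => omega
  | succ i ih =>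
    intro d hd
    rw [pow_succ, coeff_mul]
    apply Finset.sum_eq_zero
    rintro ⟨a, b⟩ hab
    rw [Finset.HasAntidiagonal.mem_antidiagonal] at hab
    by_cases ha : a < i
    · rw [ih a ha, zero_mul]
    · have hb : b = 0 := by omega
      rw [hb, h0, mul_zero]

lemma coeff_pow_self {h : PowerSeries ℂ} (h0 : coeff 0 h = 0) (n : ℕ) :
    coeff n (h ^ n) = (coeff 1 h) ^ n := by
  induction n with
  | zero => simp
  | succ n ih =>
    rw [pow_succ, coeff_mul]
    rw [Finset.sum_eq_single_of_mem (n, 1) (by rw [Finset.HasAntidiagonal.mem_antidiagonal])]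
    · rw [ih, pow_succ]
    · rintro ⟨a, b⟩ hab hne
      rw [Finset.HasAntidiagonal.mem_antidiagonal] at hab
      by_cases ha : a < n
      · rw [coeff_pow_zero_of_lt h0 n a ha, zero_mul]
      · have : a = n ∨ a = n + 1 := by omega
        rcases this with h1 | h1
        · exfalso; apply hne; simp [h1]; omega
        · have hb : b = 0 := by omega
          rw [hb, h0, mul_zero]

lemma coeff_substOne (g h : PowerSeries ℂ) (n : ℕ) :
    coeff n (substOne g h) =
      ∑ i ∈ Finset.range (n + 1), coeff i g * coeff n (h ^ i) := by
  rw [substOne, coeff_mk]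

lemma substOne_congr {f g h : PowerSeries ℂ} {n : ℕ}
    (hfg : ∀ j ≤ n, coeff j f = coeff j g) :
    coeff n (substOne f h) = coeff n (substOne g h) := by
  rw [coeff_substOne, coeff_substOne]
  apply Finset.sum_congr rfl
  intro i hi
  rw [Finset.mem_range] at hi
  rw [hfg i (by omega)]

lemma substOne_coe {h : PowerSeries ℂ} (h0 : coeff 0 h = 0) (p : Polynomial ℂ) :
    substOne (p : PowerSeries ℂ) h = Polynomial.eval₂ C h p := by
  ext n
  rw [coeff_substOne]
  rw [Polynomial.eval₂_eq_sum_range' C (n := p.natDegree + n + 1) (by omega) h]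
  rw [map_sum]
  have : ∀ i ∈ Finset.range (p.natDegree + n + 1),
      coeff n (C (p.coeff i) * h ^ i) = p.coeff i * coeff n (h ^ i) := by
    intro i _; rw [coeff_C_mul]
  rw [Finset.sum_congr rfl this]
  have : ∀ i ∈ Finset.range (n+1),
      coeff i (p : PowerSeries ℂ) * coeff n (h ^ i) = p.coeff i * coeff n (h ^ i) := by
    intro i _; rw [Polynomial.coeff_coe]
  rw [Finset.sum_congr rfl this]
  apply Finset.sum_subset
  · apply Finset.range_subset_range.2; omega
  · intro i _ hi
    rw [Finset.mem_range] at hi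
    rw [coeff_pow_zero_of_lt h0 i n (by omega), mul_zero]

lemma coeff_substOne_trunc {h : PowerSeries ℂ} (h0 : coeff 0 h = 0)
    (g : PowerSeries ℂ) {n N : ℕ} (hn : n < N) :
    coeff n (substOne g h) =
      coeff n (Polynomial.eval₂ C h (trunc N g)) := by
  rw [← substOne_coe h0]
  apply substOne_congr
  intro j hj
  rw [Polynomial.coeff_coe, coeff_trunc, if_pos (by omega)]

lemma substOne_C (h : PowerSeries ℂ) (c : ℂ) : substOne (C c) h = C c := by
  ext n
  rw [coeff_substOne]
  rcases Nat.eq_zero_or_pos n with h1 | h1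
  · subst h1; simp [coeff_zero_eq_constantCoeff]
  · rw [Finset.sum_eq_zero, coeff_C, if_neg (by omega)]
    intro i hi
    rcases Nat.eq_zero_or_pos i with h2 | h2
    · subst h2; simp [coeff_one, Nat.pos_iff_ne_zero.mp h1]
    · rw [coeff_C, if_neg (by omega), zero_mul]

lemma substOne_one (h : PowerSeries ℂ) : substOne 1 h = 1 := by
  have := substOne_C h 1; simpa using this

lemma substOne_add (f g h : PowerSeries ℂ) :
    substOne (f + g) h = substOne f h + substOne g h := by
  ext n
  rw [map_add, coeff_substOne, coeff_substOne, coeff_substOne, ← Finset.sum_add_distrib]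
  apply Finset.sum_congr rfl
  intro i _
  rw [map_add, add_mul]

lemma substOne_mul {h : PowerSeries ℂ} (h0 : coeff 0 h = 0) (f g : PowerSeries ℂ) :
    substOne (f * g) h = substOne f h * substOne g h := by
  ext n
  rw [coeff_substOne_trunc h0 _ (Nat.lt_succ_self n), coeff_mul]
  have hfac : ∀ p : ℕ × ℕ, p ∈ Finset.HasAntidiagonal.antidiagonal n →
      coeff p.1 (substOne f h) * coeff p.2 (substOne g h) =
      coeff p.1 (Polynomial.eval₂ C h (trunc (n+1) f)) *
      coeff p.2 (Polynomial.eval₂ C h (trunc (n+1) g)) := by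
    rintro ⟨a, b⟩ hab
    rw [Finset.HasAntidiagonal.mem_antidiagonal] at hab
    rw [coeff_substOne_trunc h0 f (show a < n + 1 by omega),
      coeff_substOne_trunc h0 g (show b < n + 1 by omega)]
  rw [Finset.sum_congr rfl hfac, ← coeff_mul, ← Polynomial.eval₂_mul]
  rw [← substOne_coe h0, ← substOne_coe h0]
  apply substOne_congr
  intro j hj
  rw [Polynomial.coeff_coe, Polynomial.coeff_coe, coeff_trunc, if_pos (by omega),
    Polynomial.coeff_mul, coeff_mul]
  apply Finset.sum_congr rfl
  rintro ⟨a, b⟩ hab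
  rw [Finset.HasAntidiagonal.mem_antidiagonal] at hab
  rw [coeff_trunc, coeff_trunc, if_pos (by omega), if_pos (by omega)]


/-- `g ↦ g ∘ h` as a ring homomorphism. -/
noncomputable def substHom {h : PowerSeries ℂ} (h0 : coeff 0 h = 0) :
    PowerSeries ℂ →+* PowerSeries ℂ where
  toFun g := substOne g h
  map_one' := substOne_one h
  map_mul' := substOne_mul h0
  map_zero' := by
    have := substOne_C h 0; simpa using this
  map_add' f g := substOne_add f g h

lemma substHom_apply {h : PowerSeries ℂ} (h0 : coeff 0 h = 0) (g : PowerSeries ℂ) :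
    substHom h0 g = substOne g h := rfl

lemma substOne_zero (h : PowerSeries ℂ) : substOne 0 h = 0 := by
  have := substOne_C h 0; simpa using this

lemma substOne_pow {h : PowerSeries ℂ} (h0 : coeff 0 h = 0) (f : PowerSeries ℂ) (k : ℕ) :
    substOne (f ^ k) h = (substOne f h) ^ k := by
  have := map_pow (substHom h0) f k
  simpa [substHom_apply] using this

lemma substOne_smul (c : ℂ) (f h : PowerSeries ℂ) :
    substOne (c • f) h = c • substOne f h := by
  ext n
  rw [map_smul, coeff_substOne, coeff_substOne, Finset.smul_sum]
  apply Finset.sum_congr rfl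
  intro i _
  rw [map_smul, smul_eq_mul, smul_eq_mul, mul_assoc]

lemma substOne_sub (f g h : PowerSeries ℂ) :
    substOne (f - g) h = substOne f h - substOne g h := by
  have h1 : f - g + g = f := by ring
  have := substOne_add (f - g) g h
  rw [h1] at this
  rw [eq_sub_iff_add_eq, ← this]

lemma substOne_X {h : PowerSeries ℂ} (h0 : coeff 0 h = 0) : substOne X h = h := by
  ext n
  rw [coeff_substOne]
  rcases Nat.eq_zero_or_pos n with h1 | h1
  · subst h1; simpa using h0.symm
  · rw [Finset.sum_eq_single_of_mem 1 (Finset.mem_range.2 (by omega))]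
    · simp
    · intro i _ hi
      rw [coeff_X, if_neg hi, zero_mul]

lemma substOne_id (g : PowerSeries ℂ) : substOne g X = g := by
  ext n
  rw [coeff_substOne]
  rw [Finset.sum_eq_single_of_mem n (Finset.mem_range.2 (by omega))]
  · rw [coeff_X_pow, if_pos rfl, mul_one]
  · intro i _ hi
    rw [coeff_X_pow, if_neg (fun hh => hi hh.symm), mul_zero]

lemma coeff_zero_substOne (g h : PowerSeries ℂ) :
    coeff 0 (substOne g h) = coeff 0 g := by
  rw [coeff_substOne]
  simp

lemma coeff_one_substOne {h : PowerSeries ℂ} (h0 : coeff 0 h = 0) (g : PowerSeries ℂ) :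
    coeff 1 (substOne g h) = coeff 1 g * coeff 1 h := by
  rw [coeff_substOne]
  rw [Finset.sum_range_succ, Finset.sum_range_one]
  simp

lemma substOne_assoc {h k : PowerSeries ℂ} (h0 : coeff 0 h = 0) (k0 : coeff 0 k = 0)
    (g : PowerSeries ℂ) :
    substOne (substOne g h) k = substOne g (substOne h k) := by
  have hk0 : coeff 0 (substOne h k) = 0 := by
    rw [coeff_zero_substOne, h0]
  ext n
  have key : ∀ p : Polynomial ℂ,
      substOne (Polynomial.eval₂ C h p) k = Polynomial.eval₂ C (substOne h k) p := by
    intro p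
    induction p using Polynomial.induction_on' with
    | add f g hf hg =>
      rw [Polynomial.eval₂_add, Polynomial.eval₂_add, substOne_add, hf, hg]
    | monomial m a =>
      rw [Polynomial.eval₂_monomial, Polynomial.eval₂_monomial,
        substOne_mul k0, substOne_C, substOne_pow k0]
  calc coeff n (substOne (substOne g h) k)
      = coeff n (substOne (Polynomial.eval₂ C h (trunc (n+1) g)) k) := by
        apply substOne_congr
        intro j hj
        exact coeff_substOne_trunc h0 g (by omega)
    _ = coeff n (Polynomial.eval₂ C (substOne h k) (trunc (n+1) g)) := by rw [key]
    _ = coeff n (substOne g (substOne h k)) := (coeff_substOne_trunc hk0 g (by omega)).symm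


/-- Coefficients of the compositional inverse. -/
noncomputable def invAux (φ : PowerSeries ℂ) : ℕ → ℂ
  | 0 => 0
  | 1 => (coeff 1 φ)⁻¹
  | n + 2 => -((coeff 1 φ)⁻¹) ^ (n + 2) *
      ∑ i ∈ (Finset.range (n + 2)).attach,
        invAux φ i.1 * coeff (n + 2) (φ ^ i.1)
  decreasing_by exact Finset.mem_range.mp i.2

lemma substOne_invAux {φ : PowerSeries ℂ} (h0 : coeff 0 φ = 0)
    (h1 : coeff 1 φ ≠ 0) : substOne (mk (invAux φ)) φ = X := by
  ext n
  rw [coeff_substOne]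
  match n with
  | 0 => simp [invAux]
  | 1 =>
    rw [Finset.sum_range_succ, Finset.sum_range_one]
    simp [invAux, inv_mul_cancel₀ h1]
  | (m + 2) =>
    rw [Finset.sum_range_succ]
    have hc : coeff (m + 2) (mk (invAux φ)) = invAux φ (m + 2) := coeff_mk _ _
    rw [hc, coeff_pow_self h0, invAux]
    rw [coeff_X, if_neg (by omega)]
    have hsum : ∑ i ∈ (Finset.range (m + 2)).attach,
        invAux φ i.1 * coeff (m + 2) (φ ^ i.1)
        = ∑ i ∈ Finset.range (m + 2), coeff i (mk (invAux φ)) * coeff (m + 2) (φ ^ i) := by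
      rw [← Finset.sum_attach (Finset.range (m+2)) (fun i => coeff i (mk (invAux φ)) * coeff (m + 2) (φ ^ i))]
      apply Finset.sum_congr rfl
      intro i _
      rw [coeff_mk]
    rw [hsum]
    have hinv : ((coeff 1 φ)⁻¹) ^ (m + 2) * (coeff 1 φ) ^ (m + 2) = 1 := by
      rw [← mul_pow, inv_mul_cancel₀ h1, one_pow]
    field_simp
    rw [one_div, hinv]; ring

lemma exists_inverse {φ : PowerSeries ℂ} (h0 : coeff 0 φ = 0)
    (h1 : coeff 1 φ ≠ 0) :
    ∃ ψ, coeff 0 ψ = 0 ∧ coeff 1 ψ ≠ 0 ∧ substOne ψ φ = X ∧ substOne φ ψ = X := by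
  set ψ := mk (invAux φ) with hψ
  have hψ0 : coeff 0 ψ = 0 := by simp [hψ, invAux]
  have hψ1 : coeff 1 ψ ≠ 0 := by
    have : coeff 1 ψ = (coeff 1 φ)⁻¹ := by simp [hψ, invAux]
    rw [this]
    exact inv_ne_zero h1
  have hl : substOne ψ φ = X := substOne_invAux h0 h1
  refine ⟨ψ, hψ0, hψ1, hl, ?_⟩
  set χ := mk (invAux ψ) with hχ
  have hl2 : substOne χ ψ = X := substOne_invAux hψ0 hψ1
  have : φ = χ := by
    calc φ = substOne X φ := (substOne_X h0).symm
      _ = substOne (substOne χ ψ) φ := by rw [hl2]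
      _ = substOne χ (substOne ψ φ) := substOne_assoc hψ0 h0 χ
      _ = substOne χ X := by rw [hl]
      _ = χ := substOne_id χ
  rw [this]; exact hl2

lemma coeff_pow_zero_of_lt' {w : PowerSeries ℂ} {k : ℕ}
    (hw : ∀ j, j < k → coeff j w = 0) :
    ∀ l d, d < l * k → coeff d (w ^ l) = 0 := by
  intro l
  induction l with
  | zero => intro d hd; omega
  | succ l ih =>
    intro d hd
    rw [pow_succ, coeff_mul]
    apply Finset.sum_eq_zero
    rintro ⟨a, b⟩ hab
    rw [Finset.HasAntidiagonal.mem_antidiagonal] at hab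
    have hLK : (l + 1) * k = l * k + k := by ring
    by_cases ha : a < l * k
    · rw [ih a ha, zero_mul]
    · have hb : b < k := by omega
      rw [hw b hb, mul_zero]

lemma coeff_leading {g u : PowerSeries ℂ} (hu0 : coeff 0 u = 0) {m : ℕ}
    (hlow : ∀ i, i < m → coeff i g = 0) :
    coeff m (substOne g u) = coeff m g * (coeff 1 u) ^ m := by
  rw [coeff_substOne, Finset.sum_eq_single_of_mem m (Finset.mem_range.2 (by omega))]
  · rw [coeff_pow_self hu0]
  · intro i hi hne
    rw [Finset.mem_range] at hi
    have : i < m := by omega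
    rw [hlow i this, zero_mul]

lemma eq_X_of_selfsubst {g u : PowerSeries ℂ} (hg0 : coeff 0 g = 0) (hgne : g ≠ 0)
    (hu0 : coeff 0 u = 0) (hu1 : coeff 1 u = 1)
    (hfix : substOne g u = g) : u = X := by
  by_contra hne
  set w := u - X with hw
  have hwne : w ≠ 0 := fun hh => hne (by rw [← sub_eq_zero]; exact hh)
  have hex : ∃ n, coeff n w ≠ 0 := by
    by_contra hq
    push_neg at hq
    exact hwne (PowerSeries.ext hq)
  set k := Nat.find hex with hk
  have hek : coeff k w ≠ 0 := Nat.find_spec hex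
  have hkmin : ∀ j, j < k → coeff j w = 0 := fun j hj => by
    by_contra hq; exact absurd (Nat.find_le hq : k ≤ j) (by omega)
  have hk2 : 2 ≤ k := by
    rcases Nat.lt_or_ge k 2 with h | h
    · interval_cases k
      · exfalso; apply hek; rw [hw, map_sub, hu0, coeff_X, if_neg (by omega)]; ring
      · exfalso; apply hek; rw [hw, map_sub, hu1, coeff_X, if_pos rfl]; ring
    · exact h
  have hexg : ∃ n, coeff n g ≠ 0 := by
    by_contra hq
    push_neg at hq
    exact hgne (PowerSeries.ext hq)
  set m := Nat.find hexg with hm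
  have hgm : coeff m g ≠ 0 := Nat.find_spec hexg
  have hgmin : ∀ j, j < m → coeff j g = 0 := fun j hj => by
    by_contra hq; exact absurd (Nat.find_le hq : m ≤ j) (by omega)
  have hm1 : 1 ≤ m := by
    rcases Nat.eq_zero_or_pos m with h | h
    · exact absurd (h ▸ hg0) hgm
    · exact h
  set N := m + k - 1 with hN
  have hmN : m < N := by omega
  have huxw : u = X + w := by rw [hw]; ring
  -- key claim
  have claim : ∀ i, m ≤ i → i ≤ N →
      coeff N (u ^ i) = (if i = N then 1 else 0)
        + (if i = m then (m : ℂ) * coeff k w else 0) := by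
    intro i him hiN
    rw [huxw, (Commute.all X w).add_pow, map_sum]
    have hterm : ∀ j ∈ Finset.range (i + 1),
        coeff N (X ^ j * w ^ (i - j) * ((i.choose j : ℕ) : ℂ⟦X⟧)) =
        (if j = i ∧ i = N then 1 else 0)
          + (if j = i - 1 ∧ j ≠ i ∧ i = m then (m : ℂ) * coeff k w else 0) := by
      intro j hj
      rw [Finset.mem_range] at hj
      have hji : j ≤ i := by omega
      rw [show ((i.choose j : ℕ) : ℂ⟦X⟧) = C ((i.choose j : ℕ) : ℂ) by
        rw [← map_natCast C]]
      rw [coeff_mul_C, coeff_X_pow_mul', if_pos (show j ≤ N by omega)]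
      by_cases hjei : j = i
      · rw [hjei, Nat.sub_self, pow_zero, Nat.choose_self, Nat.cast_one, mul_one,
          coeff_one,
          if_neg (show ¬(i = i - 1 ∧ i ≠ i ∧ i = m) from fun hc => hc.2.1 rfl)]
        by_cases hiN' : i = N
        · rw [if_pos (show N - i = 0 by omega), if_pos (show i = i ∧ i = N from ⟨rfl, hiN'⟩)]
          ring
        · rw [if_neg (show ¬(N - i = 0) by omega), if_neg (show ¬(i = i ∧ i = N) by tauto)]
          ring
      · by_cases hj1 : j = i - 1
        · have hch : (i.choose (i - 1) : ℂ) = (i : ℂ) := by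
            rw [← Nat.choose_symm (by omega : i - 1 ≤ i),
              show i - (i - 1) = 1 by omega, Nat.choose_one_right]
          rw [hj1, show i - (i - 1) = 1 by omega, pow_one, hch]
          by_cases him' : i = m
          · rw [show N - (i - 1) = k by omega,
              if_neg (show ¬(i - 1 = i ∧ i = N) by omega),
              if_pos (show i - 1 = i - 1 ∧ i - 1 ≠ i ∧ i = m from ⟨rfl, by omega, him'⟩),
              him']
            ring
          · rw [hkmin _ (show N - (i - 1) < k by omega),
              if_neg (show ¬(i - 1 = i ∧ i = N) by omega),
              if_neg (show ¬(i - 1 = i - 1 ∧ i - 1 ≠ i ∧ i = m) by tauto)]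
            ring
        · have hl2 : 2 ≤ i - j := by omega
          have e2 : (i - j) * k = (i - j) * (k - 1) + (i - j) := by
            calc (i - j) * k = (i - j) * ((k - 1) + 1) := by rw [show k - 1 + 1 = k by omega]
              _ = (i - j) * (k - 1) + (i - j) := by ring
          have e1 : 2 * (k - 1) ≤ (i - j) * (k - 1) := Nat.mul_le_mul_right _ hl2
          rw [coeff_pow_zero_of_lt' hkmin (i - j) (N - j) (by omega),
            if_neg (show ¬(j = i ∧ i = N) by tauto),
            if_neg (show ¬(j = i - 1 ∧ j ≠ i ∧ i = m) by tauto)]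
          ring
    rw [Finset.sum_congr rfl hterm, Finset.sum_add_distrib]
    congr 1
    · by_cases hiN' : i = N
      · simp [hiN']
      · simp [hiN']
    · by_cases him' : i = m
      · have hmem : i - 1 ∈ Finset.range (i + 1) := Finset.mem_range.2 (by omega)
        rw [Finset.sum_eq_single_of_mem (i - 1) hmem]
        · rw [if_pos ⟨rfl, by omega, him'⟩, if_pos him']
        · intro j _ hne'
          rw [if_neg (by tauto)]
      · rw [if_neg him', Finset.sum_eq_zero]
        intro j _
        rw [if_neg (by tauto)]
  -- compute the coefficient
  have hcoeff : coeff N (substOne g u)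
      = coeff N g + coeff m g * ((m : ℂ) * coeff k w) := by
    rw [coeff_substOne]
    have hterm2 : ∀ i ∈ Finset.range (N + 1),
        coeff i g * coeff N (u ^ i) =
        (if i = N then coeff N g else 0)
          + (if i = m then coeff m g * ((m : ℂ) * coeff k w) else 0) := by
      intro i hi
      rw [Finset.mem_range] at hi
      by_cases him : m ≤ i
      · rw [claim i him (by omega)]
        by_cases hiN' : i = N
        · have : i ≠ m := by omega
          rw [if_pos hiN', if_neg this, if_pos hiN', if_neg this, hiN']
          ring
        · by_cases him' : i = m
          · rw [if_neg hiN', if_pos him', if_neg hiN', if_pos him', him']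
            ring
          · rw [if_neg hiN', if_neg him', if_neg hiN', if_neg him']
            ring
      · rw [hgmin i (by omega), if_neg (by omega), if_neg (by omega), zero_mul,
          add_zero]
    rw [Finset.sum_congr rfl hterm2, Finset.sum_add_distrib]
    congr 1
    · rw [Finset.sum_eq_single_of_mem N (Finset.mem_range.2 (by omega))]
      · rw [if_pos rfl]
      · intro j _ hne'; rw [if_neg hne']
    · rw [Finset.sum_eq_single_of_mem m (Finset.mem_range.2 (by omega))]
      · rw [if_pos rfl]
      · intro j _ hne'; rw [if_neg hne']
  rw [hfix] at hcoeff
  have hzero : coeff m g * ((m : ℂ) * coeff k w) = 0 :=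
    (left_eq_add.mp hcoeff)
  exact mul_ne_zero hgm (mul_ne_zero (Nat.cast_ne_zero.2 (by omega)) hek) hzero


lemma coeff_derivativeFun (f : PowerSeries ℂ) (n : ℕ) :
    coeff n (derivativeFun f) = coeff (n + 1) f * (n + 1) :=
  coeff_derivative f n

lemma derivativeFun_C (r : ℂ) : derivativeFun (C r) = 0 :=
  derivative_C

-- derivative of powers
lemma derivativeFun_pow (h : PowerSeries ℂ) (k : ℕ) :
    derivativeFun (h ^ (k + 1)) =
      ((k + 1 : ℕ) : ℂ⟦X⟧) * h ^ k * derivativeFun h := by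
  induction k with
  | zero => simp [pow_one]
  | succ k ih =>
    rw [pow_succ, derivativeFun_mul, ih]
    simp only [smul_eq_mul]
    push_cast
    ring

lemma derivativeFun_eval₂ {h : PowerSeries ℂ} (p : Polynomial ℂ) :
    derivativeFun (Polynomial.eval₂ C h p) =
      Polynomial.eval₂ C h (Polynomial.derivative p) * derivativeFun h := by
  induction p using Polynomial.induction_on' with
  | add f g hf hg =>
    rw [Polynomial.eval₂_add, derivativeFun_add, map_add, Polynomial.eval₂_add, hf, hg]
    ring
  | monomial n a =>
    rw [Polynomial.eval₂_monomial, Polynomial.derivative_monomial]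
    match n with
    | 0 =>
      simp [derivativeFun_mul, derivativeFun_C, derivativeFun_one, smul_eq_mul]
    | (k + 1) =>
      rw [derivativeFun_mul, derivativeFun_C, derivativeFun_pow]
      rw [Nat.add_sub_cancel, Polynomial.eval₂_monomial]
      rw [map_mul C, map_natCast C]
      simp only [smul_eq_mul, derivativeFun_C, mul_zero, smul_zero, add_zero]
      push_cast
      ring

/-- Chain rule. -/
lemma derivativeFun_substOne {h : PowerSeries ℂ} (h0 : coeff 0 h = 0)
    (g : PowerSeries ℂ) :
    derivativeFun (substOne g h) = substOne (derivativeFun g) h * derivativeFun h := by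
  ext n
  rw [coeff_derivativeFun]
  rw [coeff_substOne_trunc h0 g (show n + 1 < n + 2 by omega)]
  rw [← coeff_derivativeFun, derivativeFun_eval₂]
  rw [coeff_mul, coeff_mul]
  apply Finset.sum_congr rfl
  rintro ⟨a, b⟩ hab
  rw [Finset.HasAntidiagonal.mem_antidiagonal] at hab
  congr 1
  rw [← substOne_coe h0 (Polynomial.derivative (trunc (n + 2) g))]
  apply substOne_congr
  intro j hj
  rw [Polynomial.coeff_coe, Polynomial.coeff_derivative, coeff_derivativeFun,
    coeff_trunc, if_pos (by omega)]
-- psConj lemmas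
lemma coeff_psConj (f : PowerSeries ℂ) (n : ℕ) :
    coeff n (psConj f) = starRingEnd ℂ (coeff n f) := by
  rw [psConj, coeff_map]

lemma psConj_psConj (f : PowerSeries ℂ) : psConj (psConj f) = f := by
  ext n
  rw [coeff_psConj, coeff_psConj, Complex.conj_conj]

lemma psConj_add (f g : PowerSeries ℂ) : psConj (f + g) = psConj f + psConj g :=
  map_add (PowerSeries.map (starRingEnd ℂ)) f g

lemma psConj_sub (f g : PowerSeries ℂ) : psConj (f - g) = psConj f - psConj g :=
  map_sub (PowerSeries.map (starRingEnd ℂ)) f g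

lemma psConj_mul (f g : PowerSeries ℂ) : psConj (f * g) = psConj f * psConj g :=
  map_mul (PowerSeries.map (starRingEnd ℂ)) f g

lemma psConj_pow (f : PowerSeries ℂ) (k : ℕ) : psConj (f ^ k) = (psConj f) ^ k :=
  map_pow (PowerSeries.map (starRingEnd ℂ)) f k

lemma psConj_zero : psConj 0 = 0 :=
  map_zero (PowerSeries.map (starRingEnd ℂ))

lemma psConj_X : psConj X = X := by
  ext n
  rw [coeff_psConj, coeff_X]
  split_ifs <;> simp

lemma psConj_smul (z : ℂ) (f : PowerSeries ℂ) :
    psConj (z • f) = (starRingEnd ℂ z) • psConj f := by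
  ext n
  rw [coeff_psConj, map_smul (coeff n) z f,
    map_smul (coeff n) (starRingEnd ℂ z) (psConj f), smul_eq_mul, smul_eq_mul,
    map_mul, coeff_psConj]

lemma psConj_eq_zero_iff {f : PowerSeries ℂ} : psConj f = 0 ↔ f = 0 := by
  constructor
  · intro h
    ext n
    have := congrArg (coeff n) h
    rw [coeff_psConj, map_zero] at this
    simpa using (starRingEnd ℂ).injective (by simpa using this)
  · intro h; rw [h, psConj_zero]

lemma psConj_substOne (g h : PowerSeries ℂ) :
    psConj (substOne g h) = substOne (psConj g) (psConj h) := by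
  ext n
  rw [coeff_psConj, coeff_substOne, coeff_substOne, map_sum]
  apply Finset.sum_congr rfl
  intro i _
  rw [map_mul, ← psConj_pow, coeff_psConj, coeff_psConj]

lemma psConj_derivativeFun (f : PowerSeries ℂ) :
    psConj (derivativeFun f) = derivativeFun (psConj f) := by
  ext n
  rw [coeff_psConj, coeff_derivativeFun, coeff_derivativeFun, coeff_psConj, map_mul,
    map_add, map_natCast, map_one]

lemma psConj_eq_self_real {f : PowerSeries ℂ} (h : psConj f = f) :
    ∃ fr : PowerSeries ℝ, PowerSeries.map Complex.ofRealHom fr = f := by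
  refine ⟨mk fun n => (coeff n f).re, ?_⟩
  ext n
  rw [coeff_map, coeff_mk]
  have := congrArg (coeff n) h
  rw [coeff_psConj] at this
  exact (Complex.conj_eq_iff_re.mp this)

lemma substOne_sum {ι : Type*} (k : PowerSeries ℂ) {s : Finset ι} {f : ι → PowerSeries ℂ} :
    substOne (∑ i ∈ s, f i) k = ∑ i ∈ s, substOne (f i) k := by
  classical
  induction s using Finset.induction with
  | empty => simp [substOne_zero]
  | insert _ _ hx ih =>
    rw [Finset.sum_insert hx, Finset.sum_insert hx, substOne_add, ih]

-- substPair lemmas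
lemma coeff_substPair (P : MvPowerSeries (Fin 2) ℂ) (a b : PowerSeries ℂ) (n : ℕ) :
    coeff n (substPair P a b) =
      ∑ i ∈ Finset.range (n + 1), ∑ j ∈ Finset.range (n + 1),
        MvPowerSeries.coeff (Finsupp.single 0 i + Finsupp.single 1 j) P *
          coeff n (a ^ i * b ^ j) := by
  rw [substPair, coeff_mk]

lemma coeff_pow_mul_pow_zero {a b : PowerSeries ℂ} (a0 : coeff 0 a = 0)
    (b0 : coeff 0 b = 0) {n i j : ℕ} (hij : n < i ∨ n < j) :
    coeff n (a ^ i * b ^ j) = 0 := by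
  rw [coeff_mul]
  apply Finset.sum_eq_zero
  rintro ⟨p, q⟩ hpq
  rw [Finset.HasAntidiagonal.mem_antidiagonal] at hpq
  rcases hij with h | h
  · rw [coeff_pow_zero_of_lt a0 i p (by omega), zero_mul]
  · rw [coeff_pow_zero_of_lt b0 j q (by omega), mul_zero]

/-- The double-sum truncation of `substPair`. -/
noncomputable def pairPoly (P : MvPowerSeries (Fin 2) ℂ) (N : ℕ) (a b : PowerSeries ℂ) :
    PowerSeries ℂ :=
  ∑ i ∈ Finset.range N, ∑ j ∈ Finset.range N,
    C (MvPowerSeries.coeff (Finsupp.single 0 i + Finsupp.single 1 j) P) * a ^ i * b ^ j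

lemma coeff_pairPoly (P : MvPowerSeries (Fin 2) ℂ) (N : ℕ) (a b : PowerSeries ℂ) (n : ℕ) :
    coeff n (pairPoly P N a b) =
      ∑ i ∈ Finset.range N, ∑ j ∈ Finset.range N,
        MvPowerSeries.coeff (Finsupp.single 0 i + Finsupp.single 1 j) P *
          coeff n (a ^ i * b ^ j) := by
  rw [pairPoly, map_sum]
  apply Finset.sum_congr rfl
  intro i _
  rw [map_sum]
  apply Finset.sum_congr rfl
  intro j _
  rw [mul_assoc, coeff_C_mul]

lemma coeff_substPair_pairPoly {a b : PowerSeries ℂ} (a0 : coeff 0 a = 0)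
    (b0 : coeff 0 b = 0) (P : MvPowerSeries (Fin 2) ℂ) {n N : ℕ} (hn : n < N) :
    coeff n (substPair P a b) = coeff n (pairPoly P N a b) := by
  rw [coeff_substPair, coeff_pairPoly]
  have hinner : ∀ i ∈ Finset.range (n + 1),
      ∑ j ∈ Finset.range (n + 1),
        MvPowerSeries.coeff (Finsupp.single 0 i + Finsupp.single 1 j) P *
          coeff n (a ^ i * b ^ j)
      = ∑ j ∈ Finset.range N,
        MvPowerSeries.coeff (Finsupp.single 0 i + Finsupp.single 1 j) P *
          coeff n (a ^ i * b ^ j) := by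
    intro i _
    apply Finset.sum_subset (Finset.range_subset_range.2 (by omega))
    intro j _ hj
    rw [Finset.mem_range] at hj
    rw [coeff_pow_mul_pow_zero a0 b0 (Or.inr (by omega)), mul_zero]
  rw [Finset.sum_congr rfl hinner]
  apply Finset.sum_subset (Finset.range_subset_range.2 (by omega))
  intro i _ hi
  rw [Finset.mem_range] at hi
  apply Finset.sum_eq_zero
  intro j _
  rw [coeff_pow_mul_pow_zero a0 b0 (Or.inl (by omega)), mul_zero]

lemma substOne_substPair {a b k : PowerSeries ℂ} (a0 : coeff 0 a = 0)
    (b0 : coeff 0 b = 0) (k0 : coeff 0 k = 0) (P : MvPowerSeries (Fin 2) ℂ) :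
    substOne (substPair P a b) k = substPair P (substOne a k) (substOne b k) := by
  have a0' : coeff 0 (substOne a k) = 0 := by rw [coeff_zero_substOne, a0]
  have b0' : coeff 0 (substOne b k) = 0 := by rw [coeff_zero_substOne, b0]
  ext n
  calc coeff n (substOne (substPair P a b) k)
      = coeff n (substOne (pairPoly P (n + 1) a b) k) := by
        apply substOne_congr
        intro j hj
        exact coeff_substPair_pairPoly a0 b0 P (by omega)
    _ = coeff n (pairPoly P (n + 1) (substOne a k) (substOne b k)) := by
        congr 1
        rw [pairPoly, pairPoly, substOne_sum k]
        apply Finset.sum_congr rfl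
        intro i _
        rw [substOne_sum k]
        apply Finset.sum_congr rfl
        intro j _
        rw [substOne_mul k0, substOne_mul k0, substOne_C, substOne_pow k0,
          substOne_pow k0]
    _ = coeff n (substPair P (substOne a k) (substOne b k)) :=
        (coeff_substPair_pairPoly a0' b0' P (by omega)).symm


-- conjugation of a substituted real series
lemma psConj_substPair_complexify (P : MvPowerSeries (Fin 2) ℝ) (a b : PowerSeries ℂ) :
    psConj (substPair (complexify P) a b)
      = substPair (complexify P) (psConj a) (psConj b) := by
  ext n
  rw [coeff_psConj, coeff_substPair, coeff_substPair, map_sum]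
  apply Finset.sum_congr rfl
  intro i _
  rw [map_sum]
  apply Finset.sum_congr rfl
  intro j _
  rw [map_mul]
  congr 1
  · rw [complexify, MvPowerSeries.coeff_map]
    simp [Complex.conj_ofReal]
  · rw [← psConj_pow, ← psConj_pow, ← psConj_mul, coeff_psConj]

-- order facts
lemma two_le_order_iff {h : PowerSeries ℂ} :
    2 ≤ h.order ↔ coeff 0 h = 0 ∧ coeff 1 h = 0 := by
  constructor
  · intro hle
    constructor
    · exact coeff_of_lt_order 0 (lt_of_lt_of_le (by norm_num) hle)
    · exact coeff_of_lt_order 1 (lt_of_lt_of_le (by norm_num) hle)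
  · rintro ⟨h0, h1⟩
    have := nat_le_order h 2 (by
      intro i hi
      interval_cases i
      · exact h0
      · exact h1)
    simpa using this

-- involution fixed point
lemma exists_fixed_of_involutive {α : Type*} [Finite α] {f : α → α}
    (hf : Function.Involutive f) (hodd : Odd (Nat.card α)) : ∃ a, f a = a := by
  classical
  have : Fintype α := Fintype.ofFinite α
  rw [Nat.card_eq_fintype_card] at hodd
  have key : ∀ n : ℕ, ∀ s : Finset α, s.card ≤ n → (∀ a ∈ s, f a ∈ s) →
      Odd s.card → ∃ a ∈ s, f a = a := by
    intro n
    induction n with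
    | zero =>
      intro s hs _ hodd'
      rw [Nat.le_zero] at hs
      rw [hs] at hodd'
      exact absurd hodd' (by decide)
    | succ n ih =>
      intro s hcard hclosed hodd'
      have hne : s.Nonempty := Finset.card_pos.mp (by
        rcases hodd' with ⟨t, ht⟩; omega)
      obtain ⟨a, ha⟩ := hne
      by_cases hfa : f a = a
      · exact ⟨a, ha, hfa⟩
      · have hfas : f a ∈ s := hclosed a ha
        set t := (s.erase a).erase (f a) with htdef
        have hfa_mem : f a ∈ s.erase a := Finset.mem_erase.2 ⟨hfa, hfas⟩
        have htcard : t.card = s.card - 2 := by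
          rw [htdef, Finset.card_erase_of_mem hfa_mem, Finset.card_erase_of_mem ha]
          omega
        have hclosed' : ∀ x ∈ t, f x ∈ t := by
          intro x hx
          rw [htdef, Finset.mem_erase, Finset.mem_erase] at hx
          obtain ⟨hxfa, hxa, hxs⟩ := hx
          rw [htdef, Finset.mem_erase, Finset.mem_erase]
          refine ⟨?_, ?_, hclosed x hxs⟩
          · intro hcon
            exact hxa (by rw [← hf x, hcon, hf])
          · intro hcon
            exact hxfa (by rw [← hf x, hcon])
        have hcard2 : 2 ≤ s.card := by
          have : (s.erase a).card = s.card - 1 := Finset.card_erase_of_mem ha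
          have hpos : 0 < (s.erase a).card := Finset.card_pos.2 ⟨f a, hfa_mem⟩
          omega
        obtain ⟨x, hx, hfx⟩ := ih t (by omega) hclosed' (by
          rw [htcard]
          rcases hodd' with ⟨m, hm⟩
          exact ⟨m - 1, by omega⟩)
        refine ⟨x, ?_, hfx⟩
        rw [htdef, Finset.mem_erase, Finset.mem_erase] at hx
        exact hx.2.2
  obtain ⟨a, _, hfa⟩ := key (Finset.univ.card) Finset.univ le_rfl
    (fun a _ => Finset.mem_univ _) (by simpa using hodd)
  exact ⟨a, hfa⟩

-- primitivity transport
lemma primitive_reparam {a b φ : PowerSeries ℂ} (hprim : Primitive a b)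
    (hφ0 : coeff 0 φ = 0) (hφ1 : coeff 1 φ ≠ 0) :
    Primitive (substOne a φ) (substOne b φ) := by
  rintro ⟨x', y', h, hord, hx, hy⟩
  obtain ⟨ψ, hψ0, hψ1, hψl, hψr⟩ := exists_inverse hφ0 hφ1
  obtain ⟨h0, h1⟩ := two_le_order_iff.mp hord
  apply hprim
  refine ⟨x', y', substOne h ψ, ?_, ?_, ?_⟩
  · rw [two_le_order_iff]
    constructor
    · rw [coeff_zero_substOne, h0]
    · rw [coeff_one_substOne hψ0, h1, zero_mul]
  · calc a = substOne a (substOne φ ψ) := by rw [hψr, substOne_id]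
      _ = substOne (substOne a φ) ψ := (substOne_assoc hφ0 hψ0 a).symm
      _ = substOne (substOne x' h) ψ := by rw [hx]
      _ = substOne x' (substOne h ψ) := substOne_assoc h0 hψ0 x'
  · calc b = substOne b (substOne φ ψ) := by rw [hψr, substOne_id]
      _ = substOne (substOne b φ) ψ := (substOne_assoc hφ0 hψ0 b).symm
      _ = substOne (substOne y' h) ψ := by rw [hy]
      _ = substOne y' (substOne h ψ) := substOne_assoc h0 hψ0 y'

lemma primitive_conj {a b : PowerSeries ℂ} (hprim : Primitive a b) :
    Primitive (psConj a) (psConj b) := by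
  rintro ⟨x', y', h, hord, hx, hy⟩
  obtain ⟨h0, h1⟩ := two_le_order_iff.mp hord
  apply hprim
  refine ⟨psConj x', psConj y', psConj h, ?_, ?_, ?_⟩
  · rw [two_le_order_iff, coeff_psConj, coeff_psConj, h0, h1]
    simp
  · rw [← psConj_psConj a, hx, psConj_substOne]
  · rw [← psConj_psConj b, hy, psConj_substOne]

-- transport of IsSepParam along reparametrization
lemma isSepParam_reparam {cP cQ : MvPowerSeries (Fin 2) ℂ}
    {γ δ : PowerSeries ℂ × PowerSeries ℂ} (hγ : IsSepParam cP cQ γ)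
    (hrep : Reparam γ δ) : IsSepParam cP cQ δ := by
  obtain ⟨ha0, hb0, hnz, hprim, heq⟩ := hγ
  obtain ⟨φ, hφ0, hφ1, h1, h2⟩ := hrep
  obtain ⟨ψ, hψ0, hψ1, hψl, hψr⟩ := exists_inverse hφ0 hφ1
  have hback : ∀ x : PowerSeries ℂ, substOne (substOne x φ) ψ = x := by
    intro x
    rw [substOne_assoc hφ0 hψ0, hψr, substOne_id]
  refine ⟨?_, ?_, ?_, ?_, ?_⟩
  · rw [h1, coeff_zero_substOne, ha0]
  · rw [h2, coeff_zero_substOne, hb0]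
  · rintro ⟨hz1, hz2⟩
    apply hnz
    constructor
    · rw [← hback γ.1, ← h1, hz1, substOne_zero]
    · rw [← hback γ.2, ← h2, hz2, substOne_zero]
  · rw [h1, h2]; exact primitive_reparam hprim hφ0 hφ1
  · rw [h1, h2, ← substOne_substPair ha0 hb0 hφ0 cP, ← substOne_substPair ha0 hb0 hφ0 cQ,
      derivativeFun_substOne hφ0, derivativeFun_substOne hφ0]
    calc substOne (substPair cP γ.1 γ.2) φ *
          (substOne (derivativeFun γ.2) φ * derivativeFun φ) -
        substOne (substPair cQ γ.1 γ.2) φ *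
          (substOne (derivativeFun γ.1) φ * derivativeFun φ)
        = (substOne (substPair cP γ.1 γ.2 * derivativeFun γ.2
            - substPair cQ γ.1 γ.2 * derivativeFun γ.1) φ) * derivativeFun φ := by
          rw [substOne_sub, substOne_mul hφ0, substOne_mul hφ0]
          ring
      _ = 0 := by rw [heq, substOne_zero, zero_mul]

-- transport of IsSepParam along conjugation (for real P, Q)
lemma isSepParam_conj {P Q : MvPowerSeries (Fin 2) ℝ}
    {γ : PowerSeries ℂ × PowerSeries ℂ}
    (hγ : IsSepParam (complexify P) (complexify Q) γ) :
    IsSepParam (complexify P) (complexify Q) (psConj γ.1, psConj γ.2) := by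
  obtain ⟨ha0, hb0, hnz, hprim, heq⟩ := hγ
  refine ⟨?_, ?_, ?_, ?_, ?_⟩
  · rw [coeff_psConj, ha0, map_zero]
  · rw [coeff_psConj, hb0, map_zero]
  · rintro ⟨hz1, hz2⟩
    exact hnz ⟨psConj_eq_zero_iff.mp hz1, psConj_eq_zero_iff.mp hz2⟩
  · exact primitive_conj hprim
  · have := congrArg psConj heq
    rw [psConj_zero, psConj_sub, psConj_mul, psConj_mul,
      psConj_substPair_complexify, psConj_substPair_complexify,
      psConj_derivativeFun, psConj_derivativeFun] at this
    exact this


lemma conj_ne_zero {z : ℂ} (h : z ≠ 0) : starRingEnd ℂ z ≠ 0 := by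
  simpa using h

lemma reparam_equivalence (cP cQ : MvPowerSeries (Fin 2) ℂ) :
    Equivalence (fun γ δ : {γ : PowerSeries ℂ × PowerSeries ℂ // IsSepParam cP cQ γ} =>
      Reparam γ.1 δ.1) := by
  constructor
  · intro x
    refine ⟨X, ?_, ?_, (substOne_id _).symm, (substOne_id _).symm⟩
    · rw [coeff_X]; simp
    · rw [coeff_X]; simp
  · rintro x y ⟨φ, hφ0, hφ1, h1, h2⟩
    obtain ⟨ψ, hψ0, hψ1, hψl, hψr⟩ := exists_inverse hφ0 hφ1
    refine ⟨ψ, hψ0, hψ1, ?_, ?_⟩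
    · rw [h1, substOne_assoc hφ0 hψ0, hψr, substOne_id]
    · rw [h2, substOne_assoc hφ0 hψ0, hψr, substOne_id]
  · rintro x y z ⟨φ, hφ0, hφ1, h1, h2⟩ ⟨χ, hχ0, hχ1, g1, g2⟩
    refine ⟨substOne φ χ, ?_, ?_, ?_, ?_⟩
    · rw [coeff_zero_substOne, hφ0]
    · rw [coeff_one_substOne hχ0]
      exact mul_ne_zero hφ1 hχ1
    · rw [g1, h1, substOne_assoc hφ0 hχ0]
    · rw [g2, h2, substOne_assoc hφ0 hχ0]


end SepAux

open SepAux in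
/-- let `P, Q ∈ ℝ[[x,y]]` and let `S` be the set of separatrix branches of
the complexification of `X = P ∂/∂x + Q ∂/∂y` (primitive separatrix parametrizations
modulo reparametrization by formal diffeomorphisms).  If `S` is finite of odd
cardinality, then `X` admits a real formal separatrix. -/
theorem odd_branches_real_separatrix (P Q : MvPowerSeries (Fin 2) ℝ)
    (hfin : Finite (Quot fun γ δ :
        {γ : PowerSeries ℂ × PowerSeries ℂ // IsSepParam (complexify P) (complexify Q) γ} =>
      Reparam γ.1 δ.1))
    (hodd : Odd (Nat.card (Quot fun γ δ :
        {γ : PowerSeries ℂ × PowerSeries ℂ // IsSepParam (complexify P) (complexify Q) γ} =>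
      Reparam γ.1 δ.1))) :
    ∃ a b : PowerSeries ℝ,
      IsSepParam (complexify P) (complexify Q)
        (PowerSeries.map Complex.ofRealHom a, PowerSeries.map Complex.ofRealHom b) := by
  classical
  set T := {γ : PowerSeries ℂ × PowerSeries ℂ // IsSepParam (complexify P) (complexify Q) γ}
    with hT
  let σfun : T → T := fun γ => ⟨(psConj γ.1.1, psConj γ.1.2), isSepParam_conj γ.2⟩
  have hresp : ∀ x y : T, Reparam x.1 y.1 → Reparam (σfun x).1 (σfun y).1 := by
    rintro x y ⟨φ, hφ0, hφ1, h1, h2⟩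
    refine ⟨psConj φ, ?_, ?_, ?_, ?_⟩
    · rw [coeff_psConj, hφ0, map_zero]
    · rw [coeff_psConj]; exact conj_ne_zero hφ1
    · show psConj y.1.1 = substOne (psConj x.1.1) (psConj φ)
      rw [h1, psConj_substOne]
    · show psConj y.1.2 = substOne (psConj x.1.2) (psConj φ)
      rw [h2, psConj_substOne]
  let F : (Quot fun γ δ : T => Reparam γ.1 δ.1) → (Quot fun γ δ : T => Reparam γ.1 δ.1) :=
    Quot.map σfun hresp
  have hinv : Function.Involutive F := by
    intro q
    induction q using Quot.ind with
    | _ x =>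
      show Quot.mk _ (σfun (σfun x)) = Quot.mk _ x
      congr 1
      apply Subtype.ext
      show (psConj (psConj x.1.1), psConj (psConj x.1.2)) = x.1
      rw [psConj_psConj, psConj_psConj]
  obtain ⟨q, hq⟩ := exists_fixed_of_involutive hinv hodd
  obtain ⟨x, rfl⟩ := Quot.exists_rep q
  have hEG : Relation.EqvGen (fun γ δ : T => Reparam γ.1 δ.1) (σfun x) x :=
    Quot.eqvGen_exact hq
  have hrep : Reparam (σfun x).1 x.1 :=
    (Equivalence.eqvGen_iff (reparam_equivalence _ _)).mp hEG
  obtain ⟨φ, hφ0', hφ1', h1, h2⟩ := hrep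
  obtain ⟨ha0, hb0, hnz, hprim, heqn⟩ := x.2
  set a := x.1.1 with haa
  set b := x.1.2 with hbb
  set χ := psConj φ with hχ
  have hχ0 : coeff 0 χ = 0 := by rw [hχ, coeff_psConj, hφ0', map_zero]
  have hχ1 : coeff 1 χ ≠ 0 := by rw [hχ, coeff_psConj]; exact conj_ne_zero hφ1'
  have hχ'0 : coeff 0 (psConj χ) = 0 := by rw [coeff_psConj, hχ0, map_zero]
  -- h1 : a = substOne (psConj a) φ
  have hca : psConj a = substOne a χ := by
    conv_lhs => rw [h1]
    rw [psConj_substOne, psConj_psConj]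
  have hcb : psConj b = substOne b χ := by
    conv_lhs => rw [h2]
    rw [psConj_substOne, psConj_psConj]
  -- the cocycle
  set u := substOne χ (psConj χ) with hu_def
  have hu0 : coeff 0 u = 0 := by rw [hu_def, coeff_zero_substOne, hχ0]
  have hfixa : substOne a u = a := by
    calc substOne a u = substOne (substOne a χ) (psConj χ) :=
          (substOne_assoc hχ0 hχ'0 a).symm
      _ = substOne (psConj a) (psConj χ) := by rw [← hca]
      _ = psConj (substOne a χ) := (psConj_substOne a χ).symm
      _ = psConj (psConj a) := by rw [← hca]
      _ = a := psConj_psConj a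
  have hfixb : substOne b u = b := by
    calc substOne b u = substOne (substOne b χ) (psConj χ) :=
          (substOne_assoc hχ0 hχ'0 b).symm
      _ = substOne (psConj b) (psConj χ) := by rw [← hcb]
      _ = psConj (substOne b χ) := (psConj_substOne b χ).symm
      _ = psConj (psConj b) := by rw [← hcb]
      _ = b := psConj_psConj b
  -- pick a nonzero coordinate
  obtain ⟨g, hgfix, hgne, hg0⟩ :
      ∃ g : PowerSeries ℂ, substOne g u = g ∧ g ≠ 0 ∧ coeff 0 g = 0 := by
    by_cases hA : a = 0
    · have hB : b ≠ 0 := fun hB => hnz ⟨hA, hB⟩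
      exact ⟨b, hfixb, hB, hb0⟩
    · exact ⟨a, hfixa, hA, ha0⟩
  -- the linear coefficient of u is 1
  have hexg : ∃ n, coeff n g ≠ 0 := by
    by_contra hqq
    push_neg at hqq
    exact hgne (PowerSeries.ext hqq)
  set m := Nat.find hexg with hm
  have hgm : coeff m g ≠ 0 := Nat.find_spec hexg
  have hgmin : ∀ j, j < m → coeff j g = 0 := fun j hj => by
    by_contra hqq; exact absurd (Nat.find_le hqq : m ≤ j) (by omega)
  have hm1 : 1 ≤ m := by
    rcases Nat.eq_zero_or_pos m with h | h
    · exact absurd (h ▸ hg0) hgm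
    · exact h
  have hlam : (coeff 1 u) ^ m = 1 := by
    have hh := coeff_leading (g := g) hu0 hgmin
    rw [hgfix] at hh
    nth_rewrite 1 [← mul_one (coeff m g)] at hh
    exact (mul_left_cancel₀ hgm hh).symm
  have hu1 : coeff 1 u = 1 := by
    have hval : coeff 1 u = ((Complex.normSq (coeff 1 χ) : ℝ) : ℂ) := by
      rw [hu_def, coeff_one_substOne hχ'0, coeff_psConj]
      exact Complex.mul_conj _
    rw [hval] at hlam ⊢
    rw [← Complex.ofReal_pow, ← Complex.ofReal_one, Complex.ofReal_inj] at hlam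
    rw [← Complex.ofReal_one, Complex.ofReal_inj]
    set t := Complex.normSq (coeff 1 χ) with ht
    have ht0 : 0 ≤ t := Complex.normSq_nonneg _
    rcases lt_trichotomy t 1 with hlt | heq | hgt
    · exfalso
      have := pow_lt_one₀ ht0 hlt (by omega : m ≠ 0)
      rw [hlam] at this
      exact lt_irrefl 1 this
    · exact heq
    · exfalso
      have := one_lt_pow₀ hgt (by omega : m ≠ 0)
      rw [hlam] at this
      exact lt_irrefl 1 this
  have hu : u = X := eq_X_of_selfsubst hg0 hgne hu0 hu1 hgfix
  have hu' : substOne (psConj χ) χ = X := by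
    calc substOne (psConj χ) χ
        = substOne (psConj χ) (psConj (psConj χ)) := by rw [psConj_psConj χ]
      _ = psConj (substOne χ (psConj χ)) := (psConj_substOne χ (psConj χ)).symm
      _ = psConj u := by rw [← hu_def]
      _ = X := by rw [hu, psConj_X]
  -- the averaged diffeomorphism v
  obtain ⟨v, hv0, hv1, hσv⟩ :
      ∃ v, coeff 0 v = 0 ∧ coeff 1 v ≠ 0 ∧ psConj v = substOne v (psConj χ) := by
    by_cases hcm : coeff 1 χ = -1
    · refine ⟨Complex.I • (X - χ), ?_, ?_, ?_⟩
      · rw [map_smul, map_sub, hχ0, coeff_X]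
        simp
      · rw [map_smul, map_sub, hcm, coeff_X]
        simp [Complex.I_ne_zero]
      · rw [psConj_smul, psConj_sub, psConj_X, Complex.conj_I, substOne_smul,
          substOne_sub, substOne_X hχ'0, ← hu_def, hu]
        rw [neg_smul, ← smul_neg, neg_sub]
    · refine ⟨X + χ, ?_, ?_, ?_⟩
      · rw [map_add, hχ0, coeff_X]
        simp
      · rw [map_add, coeff_X]
        intro hcon
        apply hcm
        simp at hcon
        linear_combination hcon
      · rw [psConj_add, psConj_X, substOne_add, substOne_X hχ'0, ← hu_def, hu,
          add_comm]
  obtain ⟨ψ, hψ0, hψ1, hψl, hψr⟩ := exists_inverse hv0 hv1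
  have hψ'0 : coeff 0 (psConj ψ) = 0 := by rw [coeff_psConj, hψ0, map_zero]
  have hA1 : substOne (substOne (psConj ψ) v) (psConj χ) = X := by
    have hc := congrArg psConj hψl
    rw [psConj_substOne, psConj_X, hσv] at hc
    rw [substOne_assoc hv0 hχ'0]
    exact hc
  have hA2 : substOne (psConj ψ) v = χ := by
    have hc := congrArg (fun z => substOne z χ) hA1
    rw [substOne_assoc hχ'0 hχ0, hu', substOne_id, substOne_X hχ0] at hc
    exact hc
  have hkey : substOne χ ψ = psConj ψ := by
    have hc := congrArg (fun z => substOne z ψ) hA2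
    rw [substOne_assoc hv0 hψ0, hψr, substOne_id] at hc
    exact hc.symm
  -- the real reparametrization
  set w := psConj ψ with hwdef
  have hw0 : coeff 0 w = 0 := hψ'0
  have hw1 : coeff 1 w ≠ 0 := by rw [hwdef, coeff_psConj]; exact conj_ne_zero hψ1
  have hrepδ : Reparam x.1 (substOne a w, substOne b w) := ⟨w, hw0, hw1, rfl, rfl⟩
  have hsepδ := isSepParam_reparam x.2 hrepδ
  have hreal1 : psConj (substOne a w) = substOne a w := by
    calc psConj (substOne a w) = substOne (psConj a) (psConj w) := psConj_substOne a w
      _ = substOne (substOne a χ) ψ := by rw [hca, hwdef, psConj_psConj]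
      _ = substOne a (substOne χ ψ) := substOne_assoc hχ0 hψ0 a
      _ = substOne a w := by rw [hkey, hwdef]
  have hreal2 : psConj (substOne b w) = substOne b w := by
    calc psConj (substOne b w) = substOne (psConj b) (psConj w) := psConj_substOne b w
      _ = substOne (substOne b χ) ψ := by rw [hcb, hwdef, psConj_psConj]
      _ = substOne b (substOne χ ψ) := substOne_assoc hχ0 hψ0 b
      _ = substOne b w := by rw [hkey, hwdef]
  obtain ⟨ar, har⟩ := psConj_eq_self_real hreal1
  obtain ⟨br, hbr⟩ := psConj_eq_self_real hreal2
  exact ⟨ar, br, by rw [har, hbr]; exact hsepδ⟩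
end

section
/- Let P, Q ∈ ℂ[[x,y]], and set A = u·P(x,ux) − Q(x,ux) and B = x·P(x,ux) in ℂ[[x,u]]. Let m ∈ ℕ and A₁, B₁ ∈ ℂ[[x,u]] be such that A = x^m·A₁ and B = x^m·B₁. Let x(t), u(t) ∈ ℂ[[t]] have zero constant term with x(t) ≠ 0, set y(t) = u(t)·x(t) and γ = (x(t),y(t)), and suppose T := (P∘γ)·y'(t) − (Q∘γ)·x'(t) is nonzero. Then ord T = m·ord x(t) + ord( A₁(x(t),u(t))·x'(t) + B₁(x(t),u(t))·u'(t) ). (This is the coordinate form of Proposition: for a formal branch Γ non-invariant by the foliation F and tangent to the x-axis, tg₀(F,Γ) = m·ν₀(Γ) + tg_q(F̃,Γ̃), where F̃, Γ̃ are the strict transforms under the blow-up of the origin, q is the point of Γ̃ on the exceptional divisor, and m = ν₀(F) if the blow-up is non-dicritical and m = ν₀(F)+1 if it is dicritical.) -/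
open PowerSeries

/-- The substitution `P(x, ux)` of the blow-up chart `π(x,u) = (x, ux)` into
`P ∈ ℂ[[x,y]]`, as a formal power series in the variables `(x, u)`.  (Both substituted
series have positive order, so each coefficient is given by the finite sum below: the
coefficient of a monomial of total degree `n` in `x^i (ux)^j` only involves `i + j ≤ n`.) -/
noncomputable def blowupSubst (P : MvPowerSeries (Fin 2) ℂ) : MvPowerSeries (Fin 2) ℂ :=
  fun d : Fin 2 →₀ ℕ =>
    ∑ i ∈ Finset.range (d 0 + d 1 + 1), ∑ j ∈ Finset.range (d 0 + d 1 + 1),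
      MvPowerSeries.coeff (Finsupp.single 0 i + Finsupp.single 1 j) P *
        MvPowerSeries.coeff d
          (MvPowerSeries.X 0 ^ i * (MvPowerSeries.X 0 * MvPowerSeries.X 1) ^ j)


lemma coeff_pow_mul_zero {a b : PowerSeries ℂ} (ha : PowerSeries.coeff 0 a = 0)
    (hb : PowerSeries.coeff 0 b = 0) {i j n : ℕ} (h : n < i + j) :
    PowerSeries.coeff n (a ^ i * b ^ j) = 0 := by
  have hXa : (PowerSeries.X : PowerSeries ℂ) ∣ a := PowerSeries.X_dvd_iff.mpr (by
    rwa [← PowerSeries.coeff_zero_eq_constantCoeff_apply])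
  have hXb : (PowerSeries.X : PowerSeries ℂ) ∣ b := PowerSeries.X_dvd_iff.mpr (by
    rwa [← PowerSeries.coeff_zero_eq_constantCoeff_apply])
  have hd : (PowerSeries.X : PowerSeries ℂ) ^ (i + j) ∣ a ^ i * b ^ j := by
    rw [pow_add]
    exact mul_dvd_mul (pow_dvd_pow_of_dvd hXa i) (pow_dvd_pow_of_dvd hXb j)
  exact PowerSeries.X_pow_dvd_iff.mp hd n h

lemma fs_apply0 (i j : ℕ) : ((Finsupp.single 0 i + Finsupp.single 1 j : Fin 2 →₀ ℕ)) 0 = i := by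
  simp [Finsupp.single_apply]

lemma fs_apply1 (i j : ℕ) : ((Finsupp.single 0 i + Finsupp.single 1 j : Fin 2 →₀ ℕ)) 1 = j := by
  simp [Finsupp.single_apply]

lemma fs_inj {i j k l : ℕ} :
    ((Finsupp.single 0 i + Finsupp.single 1 j : Fin 2 →₀ ℕ) = Finsupp.single 0 k + Finsupp.single 1 l)
      ↔ i = k ∧ j = l := by
  constructor
  · intro h
    constructor
    · have := congrArg (fun f => f 0) h
      simpa [fs_apply0] using this
    · have := congrArg (fun f => f 1) h
      simpa [fs_apply1] using this
  · rintro ⟨rfl, rfl⟩; rfl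

lemma fs_sub (i j : ℕ) :
    (Finsupp.single 0 (i + 1) + Finsupp.single 1 j : Fin 2 →₀ ℕ) - Finsupp.single 0 1
      = Finsupp.single 0 i + Finsupp.single 1 j := by
  ext s
  fin_cases s <;> simp [Finsupp.tsub_apply, Finsupp.single_apply]

lemma fs_sub' (i j : ℕ) :
    (Finsupp.single 0 i + Finsupp.single 1 (j + 1) : Fin 2 →₀ ℕ) - Finsupp.single 1 1
      = Finsupp.single 0 i + Finsupp.single 1 j := by
  ext s
  fin_cases s <;> simp [Finsupp.tsub_apply, Finsupp.single_apply]

lemma coeff_X0_mul (F : MvPowerSeries (Fin 2) ℂ) (i j : ℕ) :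
    MvPowerSeries.coeff (Finsupp.single 0 (i + 1) + Finsupp.single 1 j)
        (MvPowerSeries.X 0 * F)
      = MvPowerSeries.coeff (Finsupp.single 0 i + Finsupp.single 1 j) F := by
  rw [MvPowerSeries.X_def, MvPowerSeries.coeff_monomial_mul, if_pos, one_mul, fs_sub]
  rw [Finsupp.single_le_iff, fs_apply0]
  omega

lemma coeff_X0_mul_zero (F : MvPowerSeries (Fin 2) ℂ) (j : ℕ) :
    MvPowerSeries.coeff (Finsupp.single 0 0 + Finsupp.single 1 j)
        (MvPowerSeries.X 0 * F) = 0 := by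
  rw [MvPowerSeries.X_def, MvPowerSeries.coeff_monomial_mul, if_neg]
  rw [Finsupp.single_le_iff, fs_apply0]
  omega

lemma coeff_X1_mul (F : MvPowerSeries (Fin 2) ℂ) (i j : ℕ) :
    MvPowerSeries.coeff (Finsupp.single 0 i + Finsupp.single 1 (j + 1))
        (MvPowerSeries.X 1 * F)
      = MvPowerSeries.coeff (Finsupp.single 0 i + Finsupp.single 1 j) F := by
  rw [MvPowerSeries.X_def, MvPowerSeries.coeff_monomial_mul, if_pos, one_mul, fs_sub']
  rw [Finsupp.single_le_iff, fs_apply1]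
  omega

lemma coeff_X1_mul_zero (F : MvPowerSeries (Fin 2) ℂ) (i : ℕ) :
    MvPowerSeries.coeff (Finsupp.single 0 i + Finsupp.single 1 0)
        (MvPowerSeries.X 1 * F) = 0 := by
  rw [MvPowerSeries.X_def, MvPowerSeries.coeff_monomial_mul, if_neg]
  rw [Finsupp.single_le_iff, fs_apply1]
  omega

lemma coeff_substPair (P : MvPowerSeries (Fin 2) ℂ) {a b : PowerSeries ℂ}
    (ha : PowerSeries.coeff 0 a = 0) (hb : PowerSeries.coeff 0 b = 0)
    {n N : ℕ} (hn : n ≤ N) :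
    PowerSeries.coeff n (substPair P a b)
      = ∑ i ∈ Finset.range (N + 1), ∑ j ∈ Finset.range (N + 1),
          MvPowerSeries.coeff (Finsupp.single 0 i + Finsupp.single 1 j) P *
            PowerSeries.coeff n (a ^ i * b ^ j) := by
  rw [substPair, PowerSeries.coeff_mk]
  have hsub : Finset.range (n + 1) ⊆ Finset.range (N + 1) := by
    intro z hz; simp only [Finset.mem_range] at *; omega
  have step1 : ∀ i, ∑ j ∈ Finset.range (n + 1),
      MvPowerSeries.coeff (Finsupp.single 0 i + Finsupp.single 1 j) P *
        PowerSeries.coeff n (a ^ i * b ^ j)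
      = ∑ j ∈ Finset.range (N + 1),
      MvPowerSeries.coeff (Finsupp.single 0 i + Finsupp.single 1 j) P *
        PowerSeries.coeff n (a ^ i * b ^ j) := by
    intro i
    refine Finset.sum_subset hsub fun j _ hj => ?_
    have : n < i + j := by simp only [Finset.mem_range] at hj; omega
    rw [coeff_pow_mul_zero ha hb this, mul_zero]
  calc ∑ i ∈ Finset.range (n + 1), ∑ j ∈ Finset.range (n + 1),
        MvPowerSeries.coeff (Finsupp.single 0 i + Finsupp.single 1 j) P *
          PowerSeries.coeff n (a ^ i * b ^ j)
      = ∑ i ∈ Finset.range (n + 1), ∑ j ∈ Finset.range (N + 1),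
        MvPowerSeries.coeff (Finsupp.single 0 i + Finsupp.single 1 j) P *
          PowerSeries.coeff n (a ^ i * b ^ j) := Finset.sum_congr rfl fun i _ => step1 i
    _ = ∑ i ∈ Finset.range (N + 1), ∑ j ∈ Finset.range (N + 1),
        MvPowerSeries.coeff (Finsupp.single 0 i + Finsupp.single 1 j) P *
          PowerSeries.coeff n (a ^ i * b ^ j) := by
        refine Finset.sum_subset hsub fun i _ hi => ?_
        refine Finset.sum_eq_zero fun j _ => ?_
        have : n < i + j := by simp only [Finset.mem_range] at hi; omega
        rw [coeff_pow_mul_zero ha hb this, mul_zero]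

lemma substPair_sub (F G : MvPowerSeries (Fin 2) ℂ) (a b : PowerSeries ℂ) :
    substPair (F - G) a b = substPair F a b - substPair G a b := by
  ext n
  simp [substPair, map_sub, sub_mul, Finset.sum_sub_distrib]

lemma substPair_X0_mul (F : MvPowerSeries (Fin 2) ℂ) {a b : PowerSeries ℂ}
    (ha : PowerSeries.coeff 0 a = 0) (hb : PowerSeries.coeff 0 b = 0) :
    substPair (MvPowerSeries.X 0 * F) a b = a * substPair F a b := by
  ext n
  rw [coeff_substPair _ ha hb (Nat.le_succ n), PowerSeries.coeff_mul]
  have hL : ∑ i ∈ Finset.range (n + 1 + 1), ∑ j ∈ Finset.range (n + 1 + 1),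
        MvPowerSeries.coeff (Finsupp.single 0 i + Finsupp.single 1 j)
          (MvPowerSeries.X 0 * F) * PowerSeries.coeff n (a ^ i * b ^ j)
      = ∑ i ∈ Finset.range (n + 1), ∑ j ∈ Finset.range (n + 1),
          MvPowerSeries.coeff (Finsupp.single 0 i + Finsupp.single 1 j) F *
            PowerSeries.coeff n (a ^ (i + 1) * b ^ j) := by
    rw [Finset.sum_range_succ']
    have h0 : ∑ j ∈ Finset.range (n + 1 + 1),
        MvPowerSeries.coeff (Finsupp.single 0 0 + Finsupp.single 1 j)
          (MvPowerSeries.X 0 * F) * PowerSeries.coeff n (a ^ 0 * b ^ j) = 0 :=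
      Finset.sum_eq_zero fun j _ => by rw [coeff_X0_mul_zero, zero_mul]
    rw [h0, add_zero]
    refine Finset.sum_congr rfl fun i _ => ?_
    rw [Finset.sum_range_succ,
      coeff_pow_mul_zero ha hb (show n < (i + 1) + (n + 1) by omega), mul_zero, add_zero]
    exact Finset.sum_congr rfl fun j _ => by rw [coeff_X0_mul]
  rw [hL]
  symm
  calc ∑ p ∈ Finset.HasAntidiagonal.antidiagonal n,
        PowerSeries.coeff p.1 a * PowerSeries.coeff p.2 (substPair F a b)
      = ∑ p ∈ Finset.HasAntidiagonal.antidiagonal n, ∑ i ∈ Finset.range (n + 1), ∑ j ∈ Finset.range (n + 1),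
          MvPowerSeries.coeff (Finsupp.single 0 i + Finsupp.single 1 j) F *
            (PowerSeries.coeff p.1 a * PowerSeries.coeff p.2 (a ^ i * b ^ j)) := by
        refine Finset.sum_congr rfl fun p hp => ?_
        have hp2 : p.2 ≤ n := by
          have := Finset.HasAntidiagonal.mem_antidiagonal.mp hp; omega
        rw [coeff_substPair F ha hb hp2, Finset.mul_sum]
        refine Finset.sum_congr rfl fun i _ => ?_
        rw [Finset.mul_sum]
        exact Finset.sum_congr rfl fun j _ => by ring
    _ = ∑ i ∈ Finset.range (n + 1), ∑ j ∈ Finset.range (n + 1), ∑ p ∈ Finset.HasAntidiagonal.antidiagonal n,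
          MvPowerSeries.coeff (Finsupp.single 0 i + Finsupp.single 1 j) F *
            (PowerSeries.coeff p.1 a * PowerSeries.coeff p.2 (a ^ i * b ^ j)) := by
        rw [Finset.sum_comm]
        exact Finset.sum_congr rfl fun i _ => Finset.sum_comm
    _ = ∑ i ∈ Finset.range (n + 1), ∑ j ∈ Finset.range (n + 1),
          MvPowerSeries.coeff (Finsupp.single 0 i + Finsupp.single 1 j) F *
            PowerSeries.coeff n (a ^ (i + 1) * b ^ j) := by
        refine Finset.sum_congr rfl fun i _ => Finset.sum_congr rfl fun j _ => ?_
        rw [← Finset.mul_sum, ← PowerSeries.coeff_mul, pow_succ', mul_assoc]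

lemma substPair_X1_mul (F : MvPowerSeries (Fin 2) ℂ) {a b : PowerSeries ℂ}
    (ha : PowerSeries.coeff 0 a = 0) (hb : PowerSeries.coeff 0 b = 0) :
    substPair (MvPowerSeries.X 1 * F) a b = b * substPair F a b := by
  ext n
  rw [coeff_substPair _ ha hb (Nat.le_succ n), PowerSeries.coeff_mul]
  have hL : ∑ i ∈ Finset.range (n + 1 + 1), ∑ j ∈ Finset.range (n + 1 + 1),
        MvPowerSeries.coeff (Finsupp.single 0 i + Finsupp.single 1 j)
          (MvPowerSeries.X 1 * F) * PowerSeries.coeff n (a ^ i * b ^ j)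
      = ∑ i ∈ Finset.range (n + 1), ∑ j ∈ Finset.range (n + 1),
          MvPowerSeries.coeff (Finsupp.single 0 i + Finsupp.single 1 j) F *
            PowerSeries.coeff n (a ^ i * b ^ (j + 1)) := by
    rw [Finset.sum_range_succ,
      Finset.sum_eq_zero (fun j (_ : j ∈ Finset.range (n + 1 + 1)) =>
        mul_eq_zero_of_right _
          (coeff_pow_mul_zero ha hb (show n < (n + 1) + j by omega))), add_zero]
    refine Finset.sum_congr rfl fun i hi => ?_
    have hin : i ≤ n := by
      simp only [Finset.mem_range] at hi; omega
    rw [Finset.sum_range_succ']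
    rw [coeff_X1_mul_zero, zero_mul, add_zero]
    exact Finset.sum_congr rfl fun j _ => by rw [coeff_X1_mul]
  rw [hL]
  symm
  calc ∑ p ∈ Finset.HasAntidiagonal.antidiagonal n,
        PowerSeries.coeff p.1 b * PowerSeries.coeff p.2 (substPair F a b)
      = ∑ p ∈ Finset.HasAntidiagonal.antidiagonal n, ∑ i ∈ Finset.range (n + 1), ∑ j ∈ Finset.range (n + 1),
          MvPowerSeries.coeff (Finsupp.single 0 i + Finsupp.single 1 j) F *
            (PowerSeries.coeff p.1 b * PowerSeries.coeff p.2 (a ^ i * b ^ j)) := by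
        refine Finset.sum_congr rfl fun p hp => ?_
        have hp2 : p.2 ≤ n := by
          have := Finset.HasAntidiagonal.mem_antidiagonal.mp hp; omega
        rw [coeff_substPair F ha hb hp2, Finset.mul_sum]
        refine Finset.sum_congr rfl fun i _ => ?_
        rw [Finset.mul_sum]
        exact Finset.sum_congr rfl fun j _ => by ring
    _ = ∑ i ∈ Finset.range (n + 1), ∑ j ∈ Finset.range (n + 1), ∑ p ∈ Finset.HasAntidiagonal.antidiagonal n,
          MvPowerSeries.coeff (Finsupp.single 0 i + Finsupp.single 1 j) F *
            (PowerSeries.coeff p.1 b * PowerSeries.coeff p.2 (a ^ i * b ^ j)) := by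
        rw [Finset.sum_comm]
        exact Finset.sum_congr rfl fun i _ => Finset.sum_comm
    _ = ∑ i ∈ Finset.range (n + 1), ∑ j ∈ Finset.range (n + 1),
          MvPowerSeries.coeff (Finsupp.single 0 i + Finsupp.single 1 j) F *
            PowerSeries.coeff n (a ^ i * b ^ (j + 1)) := by
        refine Finset.sum_congr rfl fun i _ => Finset.sum_congr rfl fun j _ => ?_
        rw [← Finset.mul_sum, ← PowerSeries.coeff_mul]
        congr 1
        ring

lemma substPair_X0_pow_mul (m : ℕ) (F : MvPowerSeries (Fin 2) ℂ) {a b : PowerSeries ℂ}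
    (ha : PowerSeries.coeff 0 a = 0) (hb : PowerSeries.coeff 0 b = 0) :
    substPair (MvPowerSeries.X 0 ^ m * F) a b = a ^ m * substPair F a b := by
  induction m with
  | zero => simp
  | succ k ih =>
      rw [pow_succ', mul_assoc, substPair_X0_mul _ ha hb, ih, pow_succ', mul_assoc]

lemma X0X1_pow (i j : ℕ) :
    (MvPowerSeries.X 0 : MvPowerSeries (Fin 2) ℂ) ^ i
        * (MvPowerSeries.X 0 * MvPowerSeries.X 1) ^ j
      = MvPowerSeries.monomial (Finsupp.single 0 (i + j) + Finsupp.single 1 j) 1 := by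
  rw [mul_pow, show (MvPowerSeries.X 0 : MvPowerSeries (Fin 2) ℂ) ^ i
      * ((MvPowerSeries.X 0) ^ j * (MvPowerSeries.X 1) ^ j)
      = ((MvPowerSeries.X 0) ^ i * (MvPowerSeries.X 0) ^ j) * (MvPowerSeries.X 1) ^ j by ring,
    ← pow_add, MvPowerSeries.X_pow_eq, MvPowerSeries.X_pow_eq,
    MvPowerSeries.monomial_mul_monomial, one_mul]

lemma coeff_blowupSubst (P : MvPowerSeries (Fin 2) ℂ) (k l : ℕ) :
    MvPowerSeries.coeff (Finsupp.single 0 k + Finsupp.single 1 l) (blowupSubst P)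
      = if l ≤ k then
          MvPowerSeries.coeff (Finsupp.single 0 (k - l) + Finsupp.single 1 l) P
        else 0 := by
  rw [MvPowerSeries.coeff_apply, blowupSubst]
  simp only [fs_apply0, fs_apply1]
  have hterm : ∀ i j : ℕ,
      MvPowerSeries.coeff (Finsupp.single 0 k + Finsupp.single 1 l)
        ((MvPowerSeries.X 0 : MvPowerSeries (Fin 2) ℂ) ^ i
          * (MvPowerSeries.X 0 * MvPowerSeries.X 1) ^ j)
      = if i + j = k ∧ j = l then 1 else 0 := by
    intro i j
    rw [X0X1_pow, MvPowerSeries.coeff_monomial]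
    congr 1
    rw [eq_comm, fs_inj, eq_iff_iff]
    constructor
    · rintro ⟨h1, h2⟩; exact ⟨h1.symm, h2.symm⟩
    · rintro ⟨h1, h2⟩; exact ⟨h1.symm, h2.symm⟩
  have hinner : ∀ i : ℕ, ∑ j ∈ Finset.range (k + l + 1),
      MvPowerSeries.coeff (Finsupp.single 0 i + Finsupp.single 1 j) P *
        MvPowerSeries.coeff (Finsupp.single 0 k + Finsupp.single 1 l)
          ((MvPowerSeries.X 0 : MvPowerSeries (Fin 2) ℂ) ^ i
            * (MvPowerSeries.X 0 * MvPowerSeries.X 1) ^ j)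
      = if i + l = k then
          MvPowerSeries.coeff (Finsupp.single 0 i + Finsupp.single 1 l) P else 0 := by
    intro i
    rw [Finset.sum_eq_single_of_mem l (by simp only [Finset.mem_range]; omega)
      (fun j _ hj => by rw [hterm, if_neg (by tauto), mul_zero])]
    rw [hterm]
    by_cases h : i + l = k
    · rw [if_pos ⟨h, rfl⟩, mul_one, if_pos h]
    · rw [if_neg (by tauto), mul_zero, if_neg h]
  rw [Finset.sum_congr rfl fun i _ => hinner i]
  by_cases hlk : l ≤ k
  · rw [Finset.sum_eq_single_of_mem (k - l) (by simp only [Finset.mem_range]; omega)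
      (fun i _ hi => by rw [if_neg (by omega)]), if_pos (by omega), if_pos hlk]
  · rw [if_neg hlk]
    exact Finset.sum_eq_zero fun i _ => by rw [if_neg (by omega)]

lemma substPair_blowupSubst (P : MvPowerSeries (Fin 2) ℂ) {x u : PowerSeries ℂ}
    (hx : PowerSeries.coeff 0 x = 0) (hu : PowerSeries.coeff 0 u = 0) :
    substPair (blowupSubst P) x u = substPair P x (u * x) := by
  have hux : PowerSeries.coeff 0 (u * x) = 0 := by
    rw [PowerSeries.coeff_zero_eq_constantCoeff, map_mul]
    rw [PowerSeries.coeff_zero_eq_constantCoeff] at hx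
    rw [hx, mul_zero]
  ext n
  rw [coeff_substPair _ hx hu le_rfl, coeff_substPair _ hx hux le_rfl]
  calc ∑ i ∈ Finset.range (n + 1), ∑ j ∈ Finset.range (n + 1),
        MvPowerSeries.coeff (Finsupp.single 0 i + Finsupp.single 1 j) (blowupSubst P) *
          PowerSeries.coeff n (x ^ i * u ^ j)
      = ∑ p ∈ Finset.range (n + 1) ×ˢ Finset.range (n + 1),
          MvPowerSeries.coeff (Finsupp.single 0 p.1 + Finsupp.single 1 p.2) (blowupSubst P) *
            PowerSeries.coeff n (x ^ p.1 * u ^ p.2) := by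
        rw [Finset.sum_product]
    _ = ∑ p ∈ Finset.range (n + 1) ×ˢ Finset.range (n + 1),
          if p.2 ≤ p.1 then
            MvPowerSeries.coeff (Finsupp.single 0 (p.1 - p.2) + Finsupp.single 1 p.2) P *
              PowerSeries.coeff n (x ^ p.1 * u ^ p.2)
          else 0 := by
        refine Finset.sum_congr rfl fun p _ => ?_
        rw [coeff_blowupSubst, ite_mul, zero_mul]
    _ = ∑ p ∈ (Finset.range (n + 1) ×ˢ Finset.range (n + 1)).filter (fun p => p.2 ≤ p.1),
          MvPowerSeries.coeff (Finsupp.single 0 (p.1 - p.2) + Finsupp.single 1 p.2) P *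
            PowerSeries.coeff n (x ^ p.1 * u ^ p.2) := (Finset.sum_filter _ _).symm
    _ = ∑ q ∈ (Finset.range (n + 1) ×ˢ Finset.range (n + 1)).filter (fun q => q.1 + q.2 ≤ n),
          MvPowerSeries.coeff (Finsupp.single 0 q.1 + Finsupp.single 1 q.2) P *
            PowerSeries.coeff n (x ^ (q.1 + q.2) * u ^ q.2) := by
        refine Finset.sum_nbij' (fun p => (p.1 - p.2, p.2)) (fun q => (q.1 + q.2, q.2))
          ?_ ?_ ?_ ?_ ?_
        · intro p hp
          simp only [Finset.mem_filter, Finset.mem_product, Finset.mem_range] at hp ⊢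
          omega
        · intro q hq
          simp only [Finset.mem_filter, Finset.mem_product, Finset.mem_range] at hq ⊢
          omega
        · intro p hp
          simp only [Finset.mem_filter, Finset.mem_product, Finset.mem_range] at hp
          have : p.1 - p.2 + p.2 = p.1 := by omega
          simp [this]
        · intro q hq
          simp
        · intro p hp
          simp only [Finset.mem_filter, Finset.mem_product, Finset.mem_range] at hp
          have h1 : p.1 - p.2 + p.2 = p.1 := by omega
          simp only [h1]
    _ = ∑ q ∈ Finset.range (n + 1) ×ˢ Finset.range (n + 1),
          MvPowerSeries.coeff (Finsupp.single 0 q.1 + Finsupp.single 1 q.2) P *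
            PowerSeries.coeff n (x ^ (q.1 + q.2) * u ^ q.2) := by
        refine Finset.sum_filter_of_ne fun q _ hq => ?_
        by_contra hn
        exact hq (by rw [coeff_pow_mul_zero hx hu (by omega), mul_zero])
    _ = ∑ i ∈ Finset.range (n + 1), ∑ j ∈ Finset.range (n + 1),
          MvPowerSeries.coeff (Finsupp.single 0 i + Finsupp.single 1 j) P *
            PowerSeries.coeff n (x ^ i * (u * x) ^ j) := by
        symm
        rw [Finset.sum_product]
        refine Finset.sum_congr rfl fun i _ => Finset.sum_congr rfl fun j _ => ?_
        have hq : x ^ i * (u * x) ^ j = x ^ (i + j) * u ^ j := by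
          rw [mul_pow, pow_add]; ring
        rw [hq]

lemma order_pow_aux (x : PowerSeries ℂ) (m : ℕ) :
    (x ^ m : PowerSeries ℂ).order = (m : ℕ∞) * x.order := by
  induction m with
  | zero => simp
  | succ k ih => rw [pow_succ, PowerSeries.order_mul, ih]; push_cast; ring


/-- with `A = u·P(x,ux) − Q(x,ux)`, `B = x·P(x,ux)`, suppose `A = x^m·A₁`
and `B = x^m·B₁`.  For `x(t), u(t)` of positive order with `x(t) ≠ 0`, `y = u·x`,
`γ = (x,y)`, if `T = (P∘γ)·y' − (Q∘γ)·x' ≠ 0` then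
`ord T = m·ord x(t) + ord(A₁(x(t),u(t))·x' + B₁(x(t),u(t))·u')`.  This is the formula
`tg₀(F,Γ) = m·ν₀(Γ) + tg_q(F̃,Γ̃)` for the blow-up of the origin. -/
theorem tangency_order_blowup (P Q : MvPowerSeries (Fin 2) ℂ) (m : ℕ)
    (A₁ B₁ : MvPowerSeries (Fin 2) ℂ)
    (hA : MvPowerSeries.X 1 * blowupSubst P - blowupSubst Q
        = MvPowerSeries.X 0 ^ m * A₁)
    (hB : MvPowerSeries.X 0 * blowupSubst P = MvPowerSeries.X 0 ^ m * B₁)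
    (x u : PowerSeries ℂ)
    (hx : PowerSeries.coeff 0 x = 0) (hu : PowerSeries.coeff 0 u = 0)
    (hxne : x ≠ 0)
    (hT : substPair P x (u * x) * PowerSeries.derivativeFun (u * x)
        - substPair Q x (u * x) * PowerSeries.derivativeFun x ≠ 0) :
    (substPair P x (u * x) * PowerSeries.derivativeFun (u * x)
        - substPair Q x (u * x) * PowerSeries.derivativeFun x).order
      = (m : ℕ∞) * x.order
        + (substPair A₁ x u * PowerSeries.derivativeFun x
            + substPair B₁ x u * PowerSeries.derivativeFun u).order := by
  have hux : PowerSeries.coeff 0 (u * x) = 0 := by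
    rw [PowerSeries.coeff_zero_eq_constantCoeff, map_mul]
    rw [PowerSeries.coeff_zero_eq_constantCoeff] at hx
    rw [hx, mul_zero]
  have key : substPair P x (u * x) * PowerSeries.derivativeFun (u * x)
      - substPair Q x (u * x) * PowerSeries.derivativeFun x
      = x ^ m * (substPair A₁ x u * PowerSeries.derivativeFun x
          + substPair B₁ x u * PowerSeries.derivativeFun u) := by
    rw [← substPair_blowupSubst P hx hu, ← substPair_blowupSubst Q hx hu,
      PowerSeries.derivativeFun_mul]
    simp only [smul_eq_mul]
    have e1 : u * substPair (blowupSubst P) x u - substPair (blowupSubst Q) x u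
        = x ^ m * substPair A₁ x u := by
      rw [← substPair_X1_mul _ hx hu, ← substPair_sub, hA, substPair_X0_pow_mul _ _ hx hu]
    have e2 : x * substPair (blowupSubst P) x u = x ^ m * substPair B₁ x u := by
      rw [← substPair_X0_mul _ hx hu, hB, substPair_X0_pow_mul _ _ hx hu]
    linear_combination PowerSeries.derivativeFun x * e1 + PowerSeries.derivativeFun u * e2
  rw [key]
  rw [PowerSeries.order_mul, order_pow_aux]
end

section
/- Let P, Q ∈ ℂ[[x,y]], b ∈ ℂ, and let γ = (x(t), y(t)) with x(t), y(t) ∈ ℂ[[t]] of positive order. Suppose that P∘γ = b·(Q∘γ) (so γ parametrizes a branch of the polar curve {P − bQ = 0}), that Q∘γ ≠ 0, and that b·y(t) − x(t) ≠ 0. Then ord( (P∘γ)·y'(t) − (Q∘γ)·x'(t) ) + 1 = ord(Q∘γ) + ord( b·y(t) − x(t) ). (For a generic b this is the identity tg₀(F, C) + 1 = (Q, C)₀ + ν₀(C) for a branch C of the generic polar curve of the foliation F defined by ω = P dy − Q dx, where tg₀ is the tangency order, (Q,C)₀ the intersection number of {Q = 0} with C, and ν₀(C) the multiplicity of C.)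 -/
open PowerSeries

theorem derivativeFun_eq_derivative (f : PowerSeries ℂ) :
    f.derivativeFun = PowerSeries.derivative ℂ f := rfl

/-- order of derivative for a nonzero series with zero constant term. -/
theorem order_derivativeFun_add_one (f : PowerSeries ℂ) (hf : f ≠ 0)
    (h0 : PowerSeries.coeff 0 f = 0) :
    f.derivativeFun.order + 1 = f.order := by
  have hlt : f.order < ⊤ := PowerSeries.order_finite_iff_ne_zero.2 hf
  obtain ⟨n, hn⟩ := WithTop.ne_top_iff_exists.mp hlt.ne
  obtain ⟨hcn, hlow⟩ := PowerSeries.order_eq_nat.1 hn.symm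
  have hn1 : n ≠ 0 := by
    rintro rfl; exact hcn h0
  obtain ⟨m, rfl⟩ := Nat.exists_eq_succ_of_ne_zero hn1
  have hder : f.derivativeFun.order = m := by
    rw [PowerSeries.order_eq_nat]
    constructor
    · rw [derivativeFun_eq_derivative, PowerSeries.coeff_derivativeFun]
      simp only [ne_eq, mul_eq_zero, not_or]
      exact ⟨hcn, by exact_mod_cast Nat.succ_ne_zero m⟩
    · intro i hi
      rw [derivativeFun_eq_derivative, PowerSeries.coeff_derivativeFun, hlow _ (by omega), zero_mul]
  rw [hder, ← hn]
  norm_cast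

theorem derivativeFun_sub (f g : PowerSeries ℂ) :
    (f - g).derivativeFun = f.derivativeFun - g.derivativeFun := by
  ext n
  simp [derivativeFun_eq_derivative, PowerSeries.coeff_derivativeFun, sub_mul]

/-- if `γ = (x(t),y(t))` (positive order) parametrizes a branch of the polar
curve `{P − bQ = 0}`, i.e. `P∘γ = b·(Q∘γ)`, with `Q∘γ ≠ 0` and `b·y(t) − x(t) ≠ 0`, then
`ord((P∘γ)·y' − (Q∘γ)·x') + 1 = ord(Q∘γ) + ord(b·y(t) − x(t))`, i.e.
`tg₀(F,C) + 1 = (Q,C)₀ + ν₀(C)` for a branch `C` of the generic polar curve. -/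
theorem polar_tangency_identity (P Q : MvPowerSeries (Fin 2) ℂ) (b : ℂ)
    (x y : PowerSeries ℂ)
    (hx : PowerSeries.coeff 0 x = 0) (hy : PowerSeries.coeff 0 y = 0)
    (hpolar : substPair P x y = PowerSeries.C b * substPair Q x y)
    (hQ : substPair Q x y ≠ 0)
    (hby : PowerSeries.C b * y - x ≠ 0) :
    (substPair P x y * PowerSeries.derivativeFun y
        - substPair Q x y * PowerSeries.derivativeFun x).order + 1
      = (substPair Q x y).order + (PowerSeries.C b * y - x).order := by
  have hCb : (PowerSeries.C b * y).derivativeFun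
      = PowerSeries.C b * y.derivativeFun := by
    rw [PowerSeries.derivativeFun_mul, derivativeFun_eq_derivative (PowerSeries.C b),
      PowerSeries.derivativeFun_C]
    simp [smul_eq_mul, mul_comm]
  have key : substPair P x y * PowerSeries.derivativeFun y
        - substPair Q x y * PowerSeries.derivativeFun x
      = substPair Q x y * (PowerSeries.C b * y - x).derivativeFun := by
    rw [hpolar, derivativeFun_sub, hCb]
    ring
  have h0 : PowerSeries.coeff 0 (PowerSeries.C b * y - x) = 0 := by
    have := hy; have := hx
    simp only [PowerSeries.coeff_zero_eq_constantCoeff] at *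
    simp [this, ‹PowerSeries.constantCoeff y = 0›, hx, hy]
  rw [key, PowerSeries.order_mul, add_assoc,
    order_derivativeFun_add_one _ hby h0]
end
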